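/- arXiv:1501.06518 — 7 statements merged into one kernel-verified Lean document; each statement's English description precedes it below -/
import Mathlib

section
/- Let M be a finite matroid. If (T, f) is a depth-decomposition of M, then there exists a map f' from the ground set of M to the vertices of T such that (T, f') is a depth-decomposition of M and f'(e) is a leaf of T for every element e of the ground set of M. -/
/-!
Common definitions: rooted trees (encoded by a parent function), their depth,
depth-decompositions of matroids, matroid rank, circuits, contraction,
connectivity and components.
-/

/-- `u` is an ancestor of `v` (or equal to it) in the rooted tree encoded by `parent`. -/
def Anc {V : Type} (parent : V → V) (u v : V) : Prop := ∃ n : ℕ, parent^[n] v = u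

/-- `(root, parent)` encodes a rooted tree: the root is its own parent and every
vertex reaches the root by iterating `parent` (each non-root vertex is joined to its
parent by an edge). -/
def IsRootedTree {V : Type} (root : V) (parent : V → V) : Prop :=
  parent root = root ∧ ∀ v : V, ∃ n : ℕ, parent^[n] v = root

/-- The depth of a vertex in a rooted tree: the number of edges on the path from the
root to the vertex. -/
noncomputable def vdepth {V : Type} (root : V) (parent : V → V) (v : V) : ℕ :=
  sInf {n : ℕ | parent^[n] v = root}

/-- The depth of a rooted tree: the maximum number of edges on a path from the root
to a leaf, i.e. the maximal depth of a vertex. -/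
noncomputable def treeDepth {V : Type} (root : V) (parent : V → V) : ℕ :=
  sSup (Set.range (vdepth root parent))

/-- A leaf of a rooted tree: a vertex that is the parent of no other vertex. -/
def IsLeaf {V : Type} (parent : V → V) (v : V) : Prop := ∀ u : V, u ≠ v → parent u ≠ v

/-- The rank of a set `X` in a matroid `M`: the largest size of an independent subset
of `X`. -/
noncomputable def mrank {α : Type} (M : Matroid α) (X : Set α) : ℕ :=
  sSup {n : ℕ | ∃ I : Set α, I ⊆ X ∧ M.Indep I ∧ I.ncard = n}

/-- `(root, parent, f)` is a depth-decomposition of the matroid `M`: the tree is finite,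
the rank of `M` equals the number of edges of the tree (one edge per non-root vertex),
and the rank of any `X ⊆ M.E` is at most the number of edges of the union `T*(X)` of
the paths from the root to the vertices of `f(X)` (one edge per non-root vertex that is
an ancestor of, or equal to, some vertex of `f(X)`). -/
def IsDepthDecomp {α V : Type} (M : Matroid α) (root : V) (parent : V → V)
    (f : α → V) : Prop :=
  Finite V ∧ IsRootedTree root parent ∧
  mrank M M.E = Set.ncard {v : V | v ≠ root} ∧
  ∀ X : Set α, X ⊆ M.E →
    mrank M X ≤ Set.ncard {v : V | v ≠ root ∧ ∃ e ∈ X, Anc parent v (f e)}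

/-- `M` has a depth-decomposition of depth at most `d`. -/
def HasDepthDecompOfDepthLE {α : Type} (M : Matroid α) (d : ℕ) : Prop :=
  ∃ (V : Type) (root : V) (parent : V → V) (f : α → V),
    IsDepthDecomp M root parent f ∧ treeDepth root parent ≤ d

/-- The branch-depth of a matroid: the smallest depth of a depth-decomposition. -/
noncomputable def branchDepth {α : Type} (M : Matroid α) : ℕ :=
  sInf {d : ℕ | HasDepthDecompOfDepthLE M d}

/-- A circuit of a matroid: a minimal dependent set. -/
def IsCircuitOf {α : Type} (M : Matroid α) (C : Set α) : Prop :=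
  M.Dep C ∧ ∀ D : Set α, M.Dep D → D ⊆ C → D = C

/-- `N` is the contraction `M / F` of the matroid `M` by the set `F`: the ground set of
`N` is `M.E \ F`, and a set `I` disjoint from `F` is independent in `N` if and only if
`r(F ∪ I) = r(F) + |I|`. -/
def IsContractionBy {α : Type} (M : Matroid α) (F : Set α) (N : Matroid α) : Prop :=
  N.E = M.E \ F ∧
  ∀ I : Set α, N.Indep I ↔
    I ⊆ M.E \ F ∧ I.Finite ∧ mrank M (F ∪ I) = mrank M F + I.ncard

/-- A matroid is connected if its ground set is nonempty and any two distinct elements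
lie in a common circuit. -/
def IsConnectedM {α : Type} (M : Matroid α) : Prop :=
  M.E.Nonempty ∧
  ∀ x ∈ M.E, ∀ y ∈ M.E, x = y ∨ ∃ C : Set α, IsCircuitOf M C ∧ x ∈ C ∧ y ∈ C

/-- A component of a matroid: an equivalence class of the relation "equal or lying in a
common circuit" on the ground set. -/
def IsComponentOf {α : Type} (M : Matroid α) (K : Set α) : Prop :=
  ∃ x ∈ M.E,
    K = {y ∈ M.E | x = y ∨ ∃ C : Set α, IsCircuitOf M C ∧ x ∈ C ∧ y ∈ C}

lemma anc_trans {V : Type} {parent : V → V} {a b c : V}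
    (h1 : Anc parent a b) (h2 : Anc parent b c) : Anc parent a c := by
  obtain ⟨n, hn⟩ := h1; obtain ⟨m, hm⟩ := h2
  exact ⟨n + m, by rw [Function.iterate_add_apply, hm, hn]⟩

lemma exists_leaf_desc {V : Type} [Finite V] {root : V} {parent : V → V}
    (hT : IsRootedTree root parent) (v : V) :
    ∃ u, Anc parent v u ∧ IsLeaf parent u := by
  have hS : {u | Anc parent v u}.Finite := Set.toFinite _
  have hne : {u | Anc parent v u}.Nonempty := ⟨v, 0, rfl⟩
  obtain ⟨u, hu, hmax⟩ := hS.exists_maximalFor (vdepth root parent) _ hne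
  refine ⟨u, hu, ?_⟩
  intro w hw hpw
  have hwroot : w ≠ root := by
    rintro rfl
    exact hw (hpw ▸ hT.1).symm
  have hwS : Anc parent v w := anc_trans hu ⟨1, hpw⟩
  have hmemset : vdepth root parent w ∈ {n : ℕ | parent^[n] w = root} :=
    Nat.sInf_mem (hT.2 w)
  set dw := vdepth root parent w with hdw
  have hdw1 : 1 ≤ dw := by
    rcases Nat.eq_zero_or_pos dw with h0 | h1
    · exfalso; apply hwroot; have := hmemset; rw [h0] at this; exact this
    · exact h1
  have hiter : parent^[dw - 1] u = root := by
    have : parent^[(dw - 1) + 1] w = root := by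
      rwa [Nat.sub_add_cancel hdw1]
    rwa [Function.iterate_succ_apply, hpw] at this
  have hle : vdepth root parent u ≤ dw - 1 := Nat.sInf_le hiter
  have hlt : vdepth root parent u < dw := lt_of_le_of_lt hle (Nat.sub_lt hdw1 one_pos)
  have := hmax (j := w) hwS (le_of_lt hlt)
  omega

/-- If `(T, f)` is a depth-decomposition of a finite matroid `M`, then
there is a map `f'` such that `(T, f')` is a depth-decomposition of `M` and `f'(e)` is a
leaf of `T` for every element `e` of the ground set of `M`. -/
theorem depthDecomp_exists_leaf_map {α V : Type} (M : Matroid α) [M.Finite]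
    (root : V) (parent : V → V) (f : α → V)
    (h : IsDepthDecomp M root parent f) :
    ∃ f' : α → V, IsDepthDecomp M root parent f' ∧
      ∀ e ∈ M.E, IsLeaf parent (f' e) := by
  obtain ⟨hfin, hT, hrank, hX⟩ := h
  have : Finite V := hfin
  choose g hg using fun v => exists_leaf_desc hT v
  refine ⟨fun e => g (f e), ⟨hfin, hT, hrank, ?_⟩, fun e _ => (hg (f e)).2⟩
  intro X hXE
  refine le_trans (hX X hXE) (Set.ncard_le_ncard ?_ (Set.toFinite _))
  rintro v ⟨hv, e, he, hanc⟩
  exact ⟨hv, e, he, anc_trans hanc (hg (f e)).1⟩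
end

section
/- Let M be a finite matroid and let M' be a minor of M (a matroid obtained from M by a sequence of deletions and contractions of elements). If M has a depth-decomposition of depth at most d, then M' has a depth-decomposition of depth at most d. In particular, the branch-depth of M' is at most the branch-depth of M. -/
/-- One step of taking a minor: contract a single element or delete a single element
(deletion is restriction to the complement). -/
def MinorStep {α : Type} (M N : Matroid α) : Prop :=
  ∃ e ∈ M.E, IsContractionBy M {e} N ∨ N = M.restrict (M.E \ {e})

/-- `N` is a minor of `M`: `N` is obtained from `M` by a sequence of deletions and
contractions of elements. -/
def IsMinorOf {α : Type} (N M : Matroid α) : Prop :=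
  Relation.ReflTransGen (fun A B : Matroid α => MinorStep A B) M N

namespace DDHelp


open Set

variable {α : Type} {M : Matroid α} {X Y I J : Set α} {e : α}

lemma mrank_set_nonempty (M : Matroid α) (X : Set α) :
    {n : ℕ | ∃ I : Set α, I ⊆ X ∧ M.Indep I ∧ I.ncard = n}.Nonempty :=
  ⟨0, ∅, empty_subset _, M.empty_indep, ncard_empty _⟩

lemma mrank_set_bdd (hfin : M.E.Finite) (X : Set α) :
    BddAbove {n : ℕ | ∃ I : Set α, I ⊆ X ∧ M.Indep I ∧ I.ncard = n} := by
  refine ⟨M.E.ncard, fun n hn => ?_⟩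
  obtain ⟨I, _, hI, rfl⟩ := hn
  exact ncard_le_ncard hI.subset_ground hfin

lemma le_mrank (hfin : M.E.Finite) (hIX : I ⊆ X) (hI : M.Indep I) :
    I.ncard ≤ mrank M X :=
  le_csSup (mrank_set_bdd hfin X) ⟨I, hIX, hI, rfl⟩

lemma mrank_le_of_forall {k : ℕ} (h : ∀ I, I ⊆ X → M.Indep I → I.ncard ≤ k) :
    mrank M X ≤ k := by
  refine csSup_le (mrank_set_nonempty M X) ?_
  rintro n ⟨I, hIX, hI, rfl⟩
  exact h I hIX hI

lemma mrank_spec (hfin : M.E.Finite) (X : Set α) :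
    ∃ I, I ⊆ X ∧ M.Indep I ∧ I.ncard = mrank M X :=
  Nat.sSup_mem (mrank_set_nonempty M X) (mrank_set_bdd hfin X)

lemma mrank_mono (hfin : M.E.Finite) (hXY : X ⊆ Y) : mrank M X ≤ mrank M Y :=
  mrank_le_of_forall fun I hIX hI => le_mrank hfin (hIX.trans hXY) hI

lemma mrank_indep (hfin : M.E.Finite) (hI : M.Indep I) : mrank M I = I.ncard := by
  refine le_antisymm (mrank_le_of_forall fun J hJI _ => ?_)
    (le_mrank hfin Subset.rfl hI)
  exact ncard_le_ncard hJI (hfin.subset hI.subset_ground)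

lemma indep_of_le_mrank (hfin : M.E.Finite) (hIE : I ⊆ M.E)
    (h : I.ncard ≤ mrank M I) : M.Indep I := by
  obtain ⟨J, hJI, hJ, hcard⟩ := mrank_spec hfin I
  have hle : I.ncard ≤ J.ncard := by omega
  have : J = I := eq_of_subset_of_ncard_le hJI hle (hfin.subset hIE)
  exact this ▸ hJ

lemma mrank_insert_le (hfin : M.E.Finite) :
    mrank M (insert e X) ≤ mrank M X + 1 := by
  refine mrank_le_of_forall fun I hIX hI => ?_
  by_cases heI : e ∈ I
  · have h1 : (I \ {e}).ncard + 1 = I.ncard :=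
      ncard_diff_singleton_add_one heI (hfin.subset hI.subset_ground)
    have h2 : (I \ {e}).ncard ≤ mrank M X := by
      refine le_mrank hfin ?_ (hI.subset diff_subset)
      intro x hx
      rcases hIX hx.1 with h | h
      · exact absurd h hx.2
      · exact h
    omega
  · have : I ⊆ X := by
      intro x hx
      rcases hIX hx with h | h
      · exact absurd hx (by rw [h] at hx ⊢; exact heI)
      · exact h
    exact (le_mrank hfin this hI).trans (Nat.le_succ _)

lemma mrank_singleton_le (hfin : M.E.Finite) : mrank M {e} ≤ 1 :=
  mrank_le_of_forall fun I hIe _ =>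
    le_trans (ncard_le_ncard hIe (finite_singleton e)) (by simp)

lemma mrank_basis (hfin : M.E.Finite) (hJ : M.IsBasis J X) : mrank M X = J.ncard := by
  refine le_antisymm (mrank_le_of_forall fun I hIX hI => ?_) (le_mrank hfin hJ.subset hJ.indep)
  obtain ⟨I', hI', hII'⟩ := hI.subset_isBasis_of_subset hIX hJ.subset_ground
  have hcard : I'.ncard = J.ncard := hI'.restrict_isBase.ncard_eq_ncard_of_isBase hJ.restrict_isBase
  exact hcard ▸ ncard_le_ncard hII' (hfin.subset hI'.indep.subset_ground)

lemma not_mem_of_loop (hfin : M.E.Finite) (hloop : mrank M {e} = 0) (hI : M.Indep I) :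
    e ∉ I := by
  intro heI
  have : ({e} : Set α).ncard ≤ mrank M {e} :=
    le_mrank hfin Subset.rfl (hI.subset (singleton_subset_iff.2 heI))
  simp [hloop] at this

lemma mrank_insert_loop (hfin : M.E.Finite) (hloop : mrank M {e} = 0) :
    mrank M (insert e X) = mrank M X := by
  refine le_antisymm (mrank_le_of_forall fun I hIX hI => ?_) (mrank_mono hfin (subset_insert _ _))
  refine le_mrank hfin (fun x hx => ?_) hI
  rcases hIX hx with h | h
  · exact absurd (h ▸ hx) (not_mem_of_loop hfin hloop hI)
  · exact h

lemma mrank_diff_loop (hfin : M.E.Finite) (hloop : mrank M {e} = 0) :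
    mrank M (M.E \ {e}) = mrank M M.E := by
  refine le_antisymm (mrank_mono hfin diff_subset) (mrank_le_of_forall fun I hIE hI => ?_)
  exact le_mrank hfin (subset_diff_singleton hIE (not_mem_of_loop hfin hloop hI)) hI


variable {V : Type} {root : V} {parent : V → V}

lemma iter_fix {p : V → V} {r : V} (h : p r = r) (n : ℕ) : p^[n] r = r := by
  induction n with
  | zero => rfl
  | succ n ih => rw [Function.iterate_succ_apply, h, ih]

lemma anc_trans {u v x : V} (h1 : Anc parent v u) (h2 : Anc parent u x) :
    Anc parent v x := by
  obtain ⟨n, hn⟩ := h2; obtain ⟨m, hm⟩ := h1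
  exact ⟨m + n, by rw [Function.iterate_add_apply, hn, hm]⟩

lemma anc_root_iff (hT : IsRootedTree root parent) {v : V} :
    Anc parent v root ↔ v = root := by
  constructor
  · rintro ⟨n, hn⟩; rw [iter_fix hT.1 n] at hn; exact hn.symm
  · rintro rfl; exact ⟨0, rfl⟩

section Contract

open scoped Classical

variable {w : V}

lemma parent_ne_self (hT : IsRootedTree root parent) (hw : w ≠ root) : parent w ≠ w := by
  intro h
  obtain ⟨n, hn⟩ := hT.2 w
  rw [iter_fix h n] at hn
  exact hw hn

/-- merge `w` into its parent -/
noncomputable def gmap (parent : V → V) (w : V) (hpw : parent w ≠ w) :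
    V → {v : V // v ≠ w} :=
  fun u => if h : u = w then ⟨parent w, hpw⟩ else ⟨u, h⟩

noncomputable def parent' (parent : V → V) (w : V) (hpw : parent w ≠ w) :
    {v : V // v ≠ w} → {v : V // v ≠ w} :=
  fun v => gmap parent w hpw (parent v.1)

variable {hpw : parent w ≠ w}

lemma gmap_of_ne {u : V} (h : u ≠ w) : gmap parent w hpw u = ⟨u, h⟩ := by
  simp [gmap, h]

lemma gmap_w : gmap parent w hpw w = gmap parent w hpw (parent w) := by
  simp [gmap, hpw]

lemma parent'_gmap {u : V} (h : u ≠ w) :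
    parent' parent w hpw (gmap parent w hpw u) = gmap parent w hpw (parent u) := by
  rw [gmap_of_ne h]; rfl

/-- chain correspondence, downward direction -/
lemma gmap_iterate {n : ℕ} : ∀ {u v : V} (hv : v ≠ w), parent^[n] u = v →
    ∃ m ≤ n, (parent' parent w hpw)^[m] (gmap parent w hpw u) = ⟨v, hv⟩ := by
  induction n with
  | zero =>
    rintro u v hv rfl
    exact ⟨0, le_refl _, gmap_of_ne hv⟩
  | succ n ih =>
    intro u v hv h
    rw [Function.iterate_succ_apply] at h
    obtain ⟨m, hm, hme⟩ := ih hv h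
    by_cases hu : u = w
    · refine ⟨m, hm.trans (Nat.le_succ n), ?_⟩
      rw [hu, gmap_w]
      rw [hu] at hme
      exact hme
    · refine ⟨m + 1, by omega, ?_⟩
      rw [Function.iterate_succ_apply, parent'_gmap hu]
      exact hme

lemma isRootedTree' (hT : IsRootedTree root parent) (hw : w ≠ root) :
    IsRootedTree (⟨root, Ne.symm hw⟩ : {v : V // v ≠ w}) (parent' parent w hpw) := by
  constructor
  · show gmap parent w hpw (parent root) = _
    rw [hT.1, gmap_of_ne (Ne.symm hw)]
  · rintro ⟨v, hv⟩
    obtain ⟨n, hn⟩ := hT.2 v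
    obtain ⟨m, _, hme⟩ := gmap_iterate (hpw := hpw) (Ne.symm hw) hn
    rw [gmap_of_ne hv] at hme
    exact ⟨m, hme⟩

/-- chain correspondence, upward direction, for non-w start -/
lemma iterate_gmap {m : ℕ} : ∀ {u v : V} (hu : u ≠ w) (hv : v ≠ w),
    (parent' parent w hpw)^[m] (⟨u, hu⟩ : {v : V // v ≠ w}) = ⟨v, hv⟩ →
    ∃ n : ℕ, parent^[n] u = v := by
  induction m with
  | zero =>
    intro u v hu hv h
    exact ⟨0, congrArg Subtype.val h⟩
  | succ m ih =>
    intro u v hu hv h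
    rw [Function.iterate_succ_apply] at h
    have hstep : parent' parent w hpw ⟨u, hu⟩ = gmap parent w hpw (parent u) := rfl
    by_cases hpu : parent u = w
    · rw [hstep, hpu, gmap_w, gmap_of_ne hpw] at h
      obtain ⟨n, hn⟩ := ih hpw hv h
      refine ⟨n + 2, ?_⟩
      rw [show n + 2 = n + 1 + 1 by rfl, Function.iterate_succ_apply,
        Function.iterate_succ_apply, hpu, hn]
    · rw [hstep, gmap_of_ne hpu] at h
      obtain ⟨n, hn⟩ := ih hpu hv h
      exact ⟨n + 1, by rw [Function.iterate_succ_apply, hn]⟩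

lemma anc'_iff {u v : V} (hv : v ≠ w) :
    Anc (parent' parent w hpw) ⟨v, hv⟩ (gmap parent w hpw u) ↔ Anc parent v u := by
  constructor
  · rintro ⟨m, hm⟩
    by_cases hu : u = w
    · subst hu
      rw [gmap_w, gmap_of_ne hpw] at hm
      obtain ⟨n, hn⟩ := iterate_gmap hpw hv hm
      exact ⟨n + 1, by rw [Function.iterate_succ_apply, hn]⟩
    · rw [gmap_of_ne hu] at hm
      obtain ⟨n, hn⟩ := iterate_gmap hu hv hm
      exact ⟨n, hn⟩
  · rintro ⟨n, hn⟩
    obtain ⟨m, _, hme⟩ := gmap_iterate (hpw := hpw) hv hn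
    exact ⟨m, hme⟩

lemma vdepth'_le (hT : IsRootedTree root parent) (hw : w ≠ root) {v : V} (hv : v ≠ w) :
    vdepth (⟨root, Ne.symm hw⟩ : {v : V // v ≠ w}) (parent' parent w hpw) ⟨v, hv⟩ ≤
      vdepth root parent v := by
  have hne : {n : ℕ | parent^[n] v = root}.Nonempty := hT.2 v
  have hmem : parent^[vdepth root parent v] v = root := Nat.sInf_mem hne
  obtain ⟨m, hm, hme⟩ := gmap_iterate (hpw := hpw) (Ne.symm hw) hmem
  rw [gmap_of_ne hv] at hme
  exact le_trans (Nat.sInf_le hme) hm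

lemma treeDepth'_le [Finite V] (hT : IsRootedTree root parent) (hw : w ≠ root) :
    treeDepth (⟨root, Ne.symm hw⟩ : {v : V // v ≠ w}) (parent' parent w hpw) ≤
      treeDepth root parent := by
  haveI : Nonempty {v : V // v ≠ w} := ⟨⟨root, Ne.symm hw⟩⟩
  refine csSup_le (range_nonempty _) ?_
  rintro n ⟨⟨v, hv⟩, rfl⟩
  refine le_trans (vdepth'_le hT hw hv) ?_
  exact le_csSup ((Set.finite_range _).bddAbove) (mem_range_self v)

end Contract


section Lemmas

variable {α : Type} {M N : Matroid α}

lemma same_tree (hNE : N.E ⊆ M.E) (hrk : mrank N N.E = mrank M M.E)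
    (hle : ∀ X, X ⊆ N.E → mrank N X ≤ mrank M X)
    {d : ℕ} (h : HasDepthDecompOfDepthLE M d) : HasDepthDecompOfDepthLE N d := by
  obtain ⟨V, root, parent, f, ⟨hV, hT, hrkM, hcond⟩, hdep⟩ := h
  refine ⟨V, root, parent, f, ⟨hV, hT, ?_, ?_⟩, hdep⟩
  · rw [hrk, hrkM]
  · intro X hX
    exact (hle X hX).trans (hcond X (hX.trans hNE))

lemma contract_tree (hfin : M.E.Finite) {e : α} (he : e ∈ M.E)
    (hNE : N.E ⊆ M.E \ {e})
    (h1 : 1 ≤ mrank M {e})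
    (hrkN : mrank N N.E + 1 = mrank M M.E)
    (hle : ∀ X, X ⊆ N.E → mrank N X ≤ mrank M X)
    (hle2 : ∀ X, X ⊆ N.E → mrank N X + 1 ≤ mrank M (insert e X))
    {d : ℕ} (h : HasDepthDecompOfDepthLE M d) : HasDepthDecompOfDepthLE N d := by
  obtain ⟨V, root, parent, f, ⟨hV, hT, hrkM, hcond⟩, hdep⟩ := h
  haveI := hV
  set w := f e with hwdef
  have hwroot : w ≠ root := by
    intro hwr
    have h2 := hcond {e} (singleton_subset_iff.2 he)
    have hset : {v : V | v ≠ root ∧ ∃ a ∈ ({e} : Set α), Anc parent v (f a)} = ∅ := by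
      ext v
      simp only [mem_setOf_eq, mem_empty_iff_false, iff_false, not_and]
      rintro hvr ⟨a, ha, hanc⟩
      rw [mem_singleton_iff] at ha; subst ha
      rw [← hwdef, hwr] at hanc
      exact hvr ((anc_root_iff hT).1 hanc)
    rw [hset, ncard_empty] at h2
    have := h2.trans (Nat.zero_le 0)
    omega
  have hpw : parent w ≠ w := parent_ne_self hT hwroot
  refine ⟨{v : V // v ≠ w}, ⟨root, Ne.symm hwroot⟩, parent' parent w hpw,
    fun a => gmap parent w hpw (f a),
    ⟨inferInstance, isRootedTree' hT hwroot, ?_, ?_⟩,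
    le_trans (treeDepth'_le hT hwroot) hdep⟩
  · -- rank equals edge count
    have himg : Subtype.val '' {v' : {v : V // v ≠ w} |
        v' ≠ (⟨root, Ne.symm hwroot⟩ : {v : V // v ≠ w})} = {v : V | v ≠ root} \ {w} := by
      ext x
      simp only [mem_image, mem_setOf_eq, mem_diff, mem_singleton_iff]
      constructor
      · rintro ⟨⟨v, hv⟩, hne, rfl⟩
        exact ⟨fun hh => hne (Subtype.ext hh), hv⟩
      · rintro ⟨hxr, hxw⟩
        exact ⟨⟨x, hxw⟩, fun hh => hxr (congrArg Subtype.val hh), rfl⟩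
    have hc1 : {v' : {v : V // v ≠ w} |
        v' ≠ (⟨root, Ne.symm hwroot⟩ : {v : V // v ≠ w})}.ncard
        = ({v : V | v ≠ root} \ {w}).ncard := by
      rw [← himg, Set.ncard_image_of_injective _ Subtype.val_injective]
    have hwmem : w ∈ {v : V | v ≠ root} := hwroot
    have hc2 : ({v : V | v ≠ root} \ {w}).ncard + 1 = {v : V | v ≠ root}.ncard :=
      ncard_diff_singleton_add_one hwmem (Set.toFinite _)
    rw [hc1]
    omega
  · -- rank condition
    intro X hX
    have himg : Subtype.val '' {v' : {v : V // v ≠ w} |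
        v' ≠ (⟨root, Ne.symm hwroot⟩ : {v : V // v ≠ w}) ∧
        ∃ a ∈ X, Anc (parent' parent w hpw) v' (gmap parent w hpw (f a))} =
        {v : V | v ≠ root ∧ ∃ a ∈ X, Anc parent v (f a)} \ {w} := by
      ext x
      simp only [mem_image, mem_setOf_eq, mem_diff, mem_singleton_iff]
      constructor
      · rintro ⟨⟨v, hv⟩, ⟨hne, a, ha, hanc⟩, rfl⟩
        exact ⟨⟨fun hh => hne (Subtype.ext hh), a, ha, (anc'_iff hv).1 hanc⟩, hv⟩
      · rintro ⟨⟨hxr, a, ha, hanc⟩, hxw⟩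
        exact ⟨⟨x, hxw⟩, ⟨fun hh => hxr (congrArg Subtype.val hh), a, ha,
          (anc'_iff hxw).2 hanc⟩, rfl⟩
    have hnc : {v' : {v : V // v ≠ w} |
        v' ≠ (⟨root, Ne.symm hwroot⟩ : {v : V // v ≠ w}) ∧
        ∃ a ∈ X, Anc (parent' parent w hpw) v' (gmap parent w hpw (f a))}.ncard =
        ({v : V | v ≠ root ∧ ∃ a ∈ X, Anc parent v (f a)} \ {w}).ncard := by
      rw [← himg, Set.ncard_image_of_injective _ Subtype.val_injective]
    rw [hnc]
    have hXE : X ⊆ M.E := hX.trans (hNE.trans diff_subset)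
    by_cases hwA : w ∈ {v : V | v ≠ root ∧ ∃ a ∈ X, Anc parent v (f a)}
    · have hUE : insert e X ⊆ M.E := insert_subset he hXE
      have hset : {v : V | v ≠ root ∧ ∃ a ∈ insert e X, Anc parent v (f a)} =
          {v : V | v ≠ root ∧ ∃ a ∈ X, Anc parent v (f a)} := by
        ext v
        simp only [mem_setOf_eq, mem_insert_iff]
        constructor
        · rintro ⟨hvr, a, (rfl | haX), hanc⟩
          · obtain ⟨_, b, hb, hancw⟩ := hwA
            exact ⟨hvr, b, hb, anc_trans hanc hancw⟩
          · exact ⟨hvr, a, haX, hanc⟩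
        · rintro ⟨hvr, a, haX, hanc⟩
          exact ⟨hvr, a, Or.inr haX, hanc⟩
      have h3 := hcond (insert e X) hUE
      rw [hset] at h3
      have h4 := hle2 X hX
      have h5 : ({v : V | v ≠ root ∧ ∃ a ∈ X, Anc parent v (f a)} \ {w}).ncard + 1 =
          {v : V | v ≠ root ∧ ∃ a ∈ X, Anc parent v (f a)}.ncard :=
        ncard_diff_singleton_add_one hwA (Set.toFinite _)
      omega
    · rw [diff_singleton_eq_self hwA]
      exact (hle X hX).trans (hcond X hXE)

end Lemmas

section Steps

open Matroid

variable {α : Type} {M N : Matroid α}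

lemma minorStep_preserves (hfin : M.E.Finite) (hstep : MinorStep M N) :
    N.E ⊆ M.E ∧ ∀ d, HasDepthDecompOfDepthLE M d → HasDepthDecompOfDepthLE N d := by
  obtain ⟨e, he, hcon | hdel⟩ := hstep
  · -- contraction by {e}
    obtain ⟨hNE, hInd⟩ := hcon
    have hNEsub : N.E ⊆ M.E \ {e} := hNE.subset
    have hNEM : N.E ⊆ M.E := hNEsub.trans diff_subset
    have hfinN : N.E.Finite := hfin.subset hNEM
    by_cases hloop : mrank M {e} = 0
    · -- e is a loop
      have hiff : ∀ I : Set α, N.Indep I ↔ (M.Indep I ∧ I ⊆ M.E \ {e}) := by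
        intro I
        rw [hInd I]
        constructor
        · rintro ⟨hIE, hIfin, hr⟩
          rw [singleton_union, mrank_insert_loop hfin hloop, hloop, Nat.zero_add] at hr
          exact ⟨indep_of_le_mrank hfin (hIE.trans diff_subset) hr.ge, hIE⟩
        · rintro ⟨hI, hIE⟩
          refine ⟨hIE, hfin.subset (hIE.trans diff_subset), ?_⟩
          rw [singleton_union, mrank_insert_loop hfin hloop, mrank_indep hfin hI,
            hloop, Nat.zero_add]
      have hmr : ∀ X, X ⊆ N.E → mrank N X = mrank M X := by
        intro X hX
        show sSup _ = sSup _
        congr 1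
        ext n
        constructor
        · rintro ⟨I, hIX, hI, rfl⟩
          exact ⟨I, hIX, ((hiff I).1 hI).1, rfl⟩
        · rintro ⟨I, hIX, hI, rfl⟩
          exact ⟨I, hIX, (hiff I).2 ⟨hI, (hIX.trans hX).trans hNEsub⟩, rfl⟩
      refine ⟨hNEM, fun d h => same_tree hNEM ?_ (fun X hX => (hmr X hX).le) h⟩
      rw [hmr N.E Subset.rfl, hNE, mrank_diff_loop hfin hloop]
    · -- e is not a loop
      have h1 : 1 ≤ mrank M {e} := Nat.one_le_iff_ne_zero.2 hloop
      have hrk1 : mrank M {e} = 1 := le_antisymm (mrank_singleton_le hfin) h1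
      have hNindep_M : ∀ I, N.Indep I → M.Indep I ∧ I.ncard + 1 = mrank M (insert e I) := by
        intro I hI
        obtain ⟨hIE, hIfin, hr⟩ := (hInd I).1 hI
        rw [singleton_union, hrk1] at hr
        have hins : mrank M (insert e I) ≤ mrank M I + 1 := mrank_insert_le hfin
        refine ⟨indep_of_le_mrank hfin (hIE.trans diff_subset) (by omega), by omega⟩
      have hle : ∀ X, X ⊆ N.E → mrank N X ≤ mrank M X := by
        intro X hX
        exact mrank_le_of_forall fun I hIX hI => le_mrank hfin hIX (hNindep_M I hI).1
      have hle2 : ∀ X, X ⊆ N.E → mrank N X + 1 ≤ mrank M (insert e X) := by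
        intro X hX
        obtain ⟨I, hIX, hI, hcard⟩ := mrank_spec hfinN X
        obtain ⟨_, h2⟩ := hNindep_M I hI
        rw [← hcard, h2]
        exact mrank_mono hfin (insert_subset_insert hIX)
      have hrkN : mrank N N.E + 1 = mrank M M.E := by
        have hub := hle2 N.E Subset.rfl
        have hcov : insert e N.E ⊆ M.E := insert_subset he hNEM
        have hub2 : mrank N N.E + 1 ≤ mrank M M.E :=
          hub.trans (mrank_mono hfin hcov)
        have heind : M.Indep {e} := by
          refine indep_of_le_mrank hfin (singleton_subset_iff.2 he) ?_
          rw [hrk1, ncard_singleton]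
        obtain ⟨J, hJ, heJ⟩ := heind.subset_isBasis_of_subset heind.subset_ground
        have hJcard : mrank M M.E = J.ncard := mrank_basis hfin hJ
        have heJ' : e ∈ J := heJ rfl
        have hJfin : J.Finite := hfin.subset hJ.indep.subset_ground
        have hJE : J \ {e} ⊆ M.E \ {e} := diff_subset_diff_left hJ.indep.subset_ground
        have hNind : N.Indep (J \ {e}) := by
          rw [hInd]
          refine ⟨hJE, hJfin.diff, ?_⟩
          rw [singleton_union, insert_diff_singleton, insert_eq_of_mem heJ',
            mrank_indep hfin hJ.indep, hrk1]
          have := ncard_diff_singleton_add_one heJ' hJfin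
          omega
        have hJNE : J \ {e} ⊆ N.E := by rw [hNE]; exact hJE
        have hlow : (J \ {e}).ncard ≤ mrank N N.E := le_mrank hfinN hJNE hNind
        have hdcard := ncard_diff_singleton_add_one heJ' hJfin
        omega
      exact ⟨hNEM, fun d h => contract_tree hfin he hNEsub h1 hrkN hle hle2 h⟩
  · -- deletion of e
    subst hdel
    have hNE : (M.restrict (M.E \ {e})).E = M.E \ {e} := Matroid.restrict_ground_eq
    have hmr : ∀ X, X ⊆ M.E \ {e} → mrank (M.restrict (M.E \ {e})) X = mrank M X := by
      intro X hX
      show sSup _ = sSup _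
      congr 1
      ext n
      constructor
      · rintro ⟨I, hIX, hI, rfl⟩
        exact ⟨I, hIX, (Matroid.restrict_indep_iff.1 hI).1, rfl⟩
      · rintro ⟨I, hIX, hI, rfl⟩
        exact ⟨I, hIX, Matroid.restrict_indep_iff.2 ⟨hI, hIX.trans hX⟩, rfl⟩
    have hNEM : (M.restrict (M.E \ {e})).E ⊆ M.E := by rw [hNE]; exact diff_subset
    by_cases hr : mrank M (M.E \ {e}) = mrank M M.E
    · refine ⟨hNEM, fun d h => same_tree hNEM ?_ (fun X hX => ?_) h⟩
      · rw [hNE, hmr _ Subset.rfl, hr]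
      · rw [hNE] at hX
        exact (hmr X hX).le
    · have hnl : mrank M {e} ≠ 0 := fun h0 => hr (mrank_diff_loop hfin h0)
      have h1 : 1 ≤ mrank M {e} := Nat.one_le_iff_ne_zero.2 hnl
      have hdrop : mrank M (M.E \ {e}) + 1 = mrank M M.E := by
        have hins : insert e (M.E \ {e}) = M.E := by
          rw [insert_diff_singleton, insert_eq_of_mem he]
        have hu : mrank M M.E ≤ mrank M (M.E \ {e}) + 1 := by
          conv_lhs => rw [← hins]
          exact mrank_insert_le hfin
        have hlt : mrank M (M.E \ {e}) ≤ mrank M M.E := mrank_mono hfin diff_subset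
        omega
      have hcoloop : ∀ X, X ⊆ M.E \ {e} → mrank M X + 1 ≤ mrank M (insert e X) := by
        intro X hX
        obtain ⟨I, hIX, hI, hcard⟩ := mrank_spec hfin X
        obtain ⟨J, hJ, hIJ⟩ := hI.subset_isBasis_of_subset (hIX.trans hX) diff_subset
        obtain ⟨K, hK, hJK⟩ := hJ.indep.subset_isBasis_of_subset hJ.indep.subset_ground
        have hJc : J.ncard = mrank M (M.E \ {e}) := (mrank_basis hfin hJ).symm
        have hKc : K.ncard = mrank M M.E := (mrank_basis hfin hK).symm
        have hKfin : K.Finite := hfin.subset hK.indep.subset_ground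
        have hJfin : J.Finite := hKfin.subset hJK
        have hssub : J ⊂ K := hJK.ssubset_of_ne (fun hh => by rw [hh] at hJc; omega)
        obtain ⟨x, hxK, hxJ⟩ := exists_of_ssubset hssub
        have hxe : x = e := by
          by_contra hxe
          have hxE : x ∈ M.E \ {e} := ⟨hK.indep.subset_ground hxK, hxe⟩
          have hins : M.Indep (insert x J) := hK.indep.subset (insert_subset hxK hJK)
          have hsub : insert x J ⊆ M.E \ {e} := insert_subset hxE hJ.subset
          have hcard2 : (insert x J).ncard = J.ncard + 1 := ncard_insert_of_notMem hxJ hJfin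
          have hle3 := le_mrank hfin hsub hins
          omega
        rw [hxe] at hxK
        have hins : M.Indep (insert e I) := hK.indep.subset (insert_subset hxK (hIJ.trans hJK))
        have heI : e ∉ I := fun hh => ((hIX.trans hX) hh).2 rfl
        have hc3 : (insert e I).ncard = I.ncard + 1 :=
          ncard_insert_of_notMem heI (hfin.subset hI.subset_ground)
        have hle4 := le_mrank hfin (insert_subset_insert hIX) hins
        omega
      refine ⟨hNEM, fun d h => contract_tree hfin he hNE.subset h1 ?_ (fun X hX => ?_)
        (fun X hX => ?_) h⟩
      · rw [hNE, hmr _ Subset.rfl, hdrop]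
      · rw [hNE] at hX
        exact (hmr X hX).le
      · rw [hNE] at hX
        rw [hmr X hX]
        exact hcoloop X hX
  

end Steps

end DDHelp

/-- If `M'` is a minor of a finite matroid `M` and `M` has a
depth-decomposition of depth at most `d`, then so does `M'`; in particular the
branch-depth of `M'` is at most the branch-depth of `M`. -/
theorem minor_hasDepthDecomp {α : Type} (M M' : Matroid α) [M.Finite]
    (hminor : IsMinorOf M' M) (d : ℕ) (hM : HasDepthDecompOfDepthLE M d) :
    HasDepthDecompOfDepthLE M' d ∧ branchDepth M' ≤ branchDepth M := by
  have hfin : M.E.Finite := M.ground_finite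
  have key : ∀ N : Matroid α, IsMinorOf N M →
      N.E ⊆ M.E ∧ ∀ d', HasDepthDecompOfDepthLE M d' → HasDepthDecompOfDepthLE N d' := by
    intro N hN
    induction hN with
    | refl => exact ⟨Set.Subset.rfl, fun _ h => h⟩
    | tail hMB hstep ih =>
      obtain ⟨hsub, hfun⟩ := ih
      obtain ⟨hsub2, hfun2⟩ := DDHelp.minorStep_preserves (hfin.subset hsub) hstep
      exact ⟨hsub2.trans hsub, fun d' h => hfun2 d' (hfun d' h)⟩
  refine ⟨(key M' hminor).2 d hM, ?_⟩
  have hne : ({d' | HasDepthDecompOfDepthLE M d'}).Nonempty := ⟨d, hM⟩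
  have hmem := Nat.sInf_mem hne
  exact Nat.sInf_le ((key M' hminor).2 _ hmem)
end

section
/- Let M be a finite matroid that has a circuit of size d. Then every depth-decomposition (T, f) of M has depth h satisfying 2^h ≥ d. In particular, the branch-depth of M is at least log₂ d. -/
namespace BD
variable {V : Type} {root : V} {parent : V → V}

lemma iter_root (hpr : parent root = root) : ∀ n, parent^[n] root = root := by
  intro n; induction n with
  | zero => rfl
  | succ n ih => rw [Function.iterate_succ_apply, hpr, ih]

lemma anc_refl (u : V) : Anc parent u u := ⟨0, rfl⟩

lemma anc_trans {u v x : V} (h1 : Anc parent u v) (h2 : Anc parent v x) : Anc parent u x := by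
  obtain ⟨m, hm⟩ := h1; obtain ⟨n, hn⟩ := h2
  exact ⟨m + n, by rw [Function.iterate_add_apply, hn, hm]⟩

lemma anc_parent {j : V} : Anc parent (parent j) j := ⟨1, rfl⟩

lemma vdepth_iterate (hT : IsRootedTree root parent) (v : V) :
    parent^[vdepth root parent v] v = root :=
  Nat.sInf_mem (hT.2 v)

lemma vdepth_le {v : V} {k : ℕ} (hk : parent^[k] v = root) : vdepth root parent v ≤ k :=
  Nat.sInf_le hk

lemma vdepth_root : vdepth root parent root = 0 :=
  Nat.le_zero.1 (vdepth_le (by rfl))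

lemma vdepth_eq_zero (hT : IsRootedTree root parent) {v : V}
    (h : vdepth root parent v = 0) : v = root := by
  have := vdepth_iterate hT v; rwa [h] at this

lemma iterate_of_le (hT : IsRootedTree root parent) {v : V} {n : ℕ}
    (hn : vdepth root parent v ≤ n) : parent^[n] v = root := by
  have h := vdepth_iterate hT v
  rw [← Nat.sub_add_cancel hn, Function.iterate_add_apply, h, iter_root hT.1]

lemma vdepth_parent (hT : IsRootedTree root parent) {v : V} (hv : v ≠ root) :
    vdepth root parent v = vdepth root parent (parent v) + 1 := by
  have h1 : 1 ≤ vdepth root parent v := by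
    rcases Nat.eq_zero_or_pos (vdepth root parent v) with h | h
    · exact absurd (vdepth_eq_zero hT h) hv
    · exact h
  have h2 : parent^[vdepth root parent v - 1] (parent v) = root := by
    have := vdepth_iterate hT v
    rwa [← Nat.sub_add_cancel h1, Function.iterate_succ_apply] at this
  have h3 : vdepth root parent (parent v) ≤ vdepth root parent v - 1 := vdepth_le h2
  have h4 : parent^[vdepth root parent (parent v) + 1] v = root := by
    rw [Function.iterate_succ_apply]; exact vdepth_iterate hT (parent v)
  have h5 := vdepth_le h4
  omega

lemma fixpoint_root (hT : IsRootedTree root parent) {u : V} {m : ℕ}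
    (hm : parent^[m] u = u) (h1 : 1 ≤ m) : u = root := by
  have key : ∀ k, parent^[k * m] u = u := by
    intro k; induction k with
    | zero => simp
    | succ k ih => rw [Nat.succ_mul, Function.iterate_add_apply, hm, ih]
  have h2 : vdepth root parent u ≤ vdepth root parent u * m := Nat.le_mul_of_pos_right _ h1
  have := iterate_of_le hT h2
  rw [key (vdepth root parent u)] at this
  exact this

lemma anc_root (hT : IsRootedTree root parent) {v : V} (h : Anc parent v root) : v = root := by
  obtain ⟨n, hn⟩ := h; rw [iter_root hT.1] at hn; exact hn.symm

lemma anc_comparable {u w x : V} (h1 : Anc parent u x) (h2 : Anc parent w x) :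
    Anc parent u w ∨ Anc parent w u := by
  obtain ⟨m, hm⟩ := h1; obtain ⟨n, hn⟩ := h2
  rcases le_total m n with h | h
  · right
    exact ⟨n - m, by rw [← hm, ← Function.iterate_add_apply, Nat.sub_add_cancel h, hn]⟩
  · left
    exact ⟨m - n, by rw [← hn, ← Function.iterate_add_apply, Nat.sub_add_cancel h, hm]⟩

/-- a kid cannot be an ancestor of its parent -/
lemma not_anc_kid (hT : IsRootedTree root parent) {u j : V} (hj : parent j = u) (hju : j ≠ u) :
    ¬ Anc parent j u := by
  rintro ⟨n, hn⟩
  have h : parent^[n + 1] u = u := by rw [Function.iterate_succ_apply', hn, hj]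
  have hu : u = root := fixpoint_root hT h (by omega)
  have : j = root := by
    rw [hu] at hn; rw [← hn, iter_root hT.1]
  exact hju (this.trans hu.symm)

/-- decomposition of descendants of u -/
lemma anc_cases (hT : IsRootedTree root parent) {u x : V} (hx : Anc parent u x) :
    x = u ∨ ∃ j, parent j = u ∧ j ≠ u ∧ Anc parent j x := by
  classical
  by_cases hxu : x = u
  · exact Or.inl hxu
  right
  have hex : ∃ n, parent^[n] x = u := hx
  let n₀ := Nat.find hex
  have hn₀ : parent^[n₀] x = u := Nat.find_spec hex
  have h1 : 1 ≤ n₀ := by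
    rcases Nat.eq_zero_or_pos n₀ with h | h
    · exact absurd (by rw [← hn₀, h]; rfl) hxu
    · exact h
  refine ⟨parent^[n₀ - 1] x, ?_, ?_, ⟨n₀ - 1, rfl⟩⟩
  · calc parent (parent^[n₀ - 1] x) = parent^[n₀ - 1 + 1] x :=
          (Function.iterate_succ_apply' _ _ _).symm
      _ = u := by rw [Nat.sub_add_cancel h1]; exact hn₀
  · intro hju
    exact Nat.find_min hex (show n₀ - 1 < n₀ by omega) hju

lemma kids_disjoint (hT : IsRootedTree root parent) {u j j' x : V}
    (hj : parent j = u) (hju : j ≠ u) (hj' : parent j' = u) (hj'u : j' ≠ u)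
    (hjj' : j ≠ j') (h1 : Anc parent j x) (h2 : Anc parent j' x) : False := by
  rcases anc_comparable h1 h2 with h | h
  · obtain ⟨m, hm⟩ := h
    rcases Nat.eq_zero_or_pos m with h0 | h0
    · rw [h0] at hm; simp at hm; exact hjj' hm.symm
    · have : Anc parent j u := by
        refine ⟨m - 1, ?_⟩
        calc parent^[m - 1] u = parent^[m - 1] (parent j') := by rw [hj']
          _ = parent^[m - 1 + 1] j' := (Function.iterate_succ_apply _ _ _).symm
          _ = j := by rw [Nat.sub_add_cancel h0]; exact hm
      exact not_anc_kid hT hj hju this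
  · obtain ⟨m, hm⟩ := h
    rcases Nat.eq_zero_or_pos m with h0 | h0
    · rw [h0] at hm; simp at hm; exact hjj' hm
    · have : Anc parent j' u := by
        refine ⟨m - 1, ?_⟩
        calc parent^[m - 1] u = parent^[m - 1] (parent j) := by rw [hj]
          _ = parent^[m - 1 + 1] j := (Function.iterate_succ_apply _ _ _).symm
          _ = j' := by rw [Nat.sub_add_cancel h0]; exact hm
      exact not_anc_kid hT hj' hj'u this

lemma vdepth_le_treeDepth [Finite V] (v : V) :
    vdepth root parent v ≤ treeDepth root parent := by
  apply le_csSup ((Set.finite_range _).bddAbove)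
  exact Set.mem_range_self v

lemma vdepth_kid (hT : IsRootedTree root parent) {u j : V} (hj : parent j = u) (hju : j ≠ u) :
    vdepth root parent j = vdepth root parent u + 1 := by
  have hjr : j ≠ root := by
    intro h; subst h; rw [hT.1] at hj; exact hju hj
  rw [vdepth_parent hT hjr, hj]

/-- ancestors of w other than w and root: at most (vdepth w - 1) many -/
lemma strict_anc_card (hT : IsRootedTree root parent) [Finite V] (w : V) :
    {v : V | Anc parent v w ∧ v ≠ w ∧ v ≠ root}.ncard ≤ vdepth root parent w - 1 := by
  classical
  set t := vdepth root parent w with ht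
  have hsub : {v : V | Anc parent v w ∧ v ≠ w ∧ v ≠ root} ⊆
      ↑((Finset.Ico 1 t).image (fun k => parent^[k] w)) := by
    rintro v ⟨⟨n, hn⟩, hvw, hvr⟩
    simp only [Finset.coe_image, Set.mem_image, Finset.mem_coe, Finset.mem_Ico]
    have hnt : n < t := by
      by_contra hge
      push_neg at hge
      rw [iterate_of_le hT (ht ▸ hge)] at hn
      exact hvr hn.symm
    have hn1 : 1 ≤ n := by
      rcases Nat.eq_zero_or_pos n with h0 | h0
      · rw [h0] at hn; exact absurd hn.symm hvw
      · exact h0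
    exact ⟨n, ⟨hn1, hnt⟩, hn⟩
  calc {v : V | Anc parent v w ∧ v ≠ w ∧ v ≠ root}.ncard
      ≤ ((Finset.Ico 1 t).image (fun k => parent^[k] w)).card := by
        rw [← Set.ncard_coe_finset]
        exact Set.ncard_le_ncard hsub (Set.toFinite _)
    _ ≤ (Finset.Ico 1 t).card := Finset.card_image_le
    _ = t - 1 := by rw [Nat.card_Ico]

end BD

namespace BD2
variable {α : Type}

lemma ncard_biUnion {ι : Type} (s : Finset ι) (A : ι → Set α)
    (hfin : ∀ i, (A i).Finite)
    (hdisj : ∀ i ∈ s, ∀ j ∈ s, i ≠ j → Disjoint (A i) (A j)) :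
    (⋃ i ∈ s, A i).ncard = ∑ i ∈ s, (A i).ncard := by
  classical
  induction s using Finset.induction_on with
  | empty => simp
  | @insert a s ha ih =>
    rw [Finset.sum_insert ha]
    have hU : (⋃ i ∈ insert a s, A i) = A a ∪ ⋃ i ∈ s, A i := by
      simp [Set.biUnion_insert]
    have hfinU : (⋃ i ∈ s, A i).Finite :=
      Set.Finite.biUnion s.finite_toSet (fun i _ => hfin i)
    have hdisj' : Disjoint (A a) (⋃ i ∈ s, A i) := by
      apply Set.disjoint_iUnion_right.2
      intro i
      apply Set.disjoint_iUnion_right.2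
      intro hi
      exact hdisj a (Finset.mem_insert_self a s) i (Finset.mem_insert_of_mem hi)
        (fun h => ha (h ▸ hi))
    rw [hU, Set.ncard_union_eq hdisj' (hfin a) hfinU]
    rw [ih (fun i hi => fun j hj hij => hdisj i (Finset.mem_insert_of_mem hi) j
        (Finset.mem_insert_of_mem hj) hij)]

end BD2

namespace BD3
open BD2
variable {V α : Type} {root : V} {parent : V → V}

noncomputable def kidsF (parent : V → V) [Finite V] (u : V) : Finset V :=
  (Set.toFinite {j : V | parent j = u ∧ j ≠ u}).toFinset

lemma mem_kidsF [Finite V] {u j : V} : j ∈ kidsF parent u ↔ parent j = u ∧ j ≠ u := by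
  simp [kidsF]

lemma count_partition [Finite V] (hT : IsRootedTree root parent) (f : α → V)
    (T : Set α) (hTfin : T.Finite) (u : V) :
    {e ∈ T | Anc parent u (f e)}.ncard =
      {e ∈ T | f e = u}.ncard + ∑ j ∈ kidsF parent u, {e ∈ T | Anc parent j (f e)}.ncard := by
  have hseteq : {e ∈ T | Anc parent u (f e)} =
      {e ∈ T | f e = u} ∪ ⋃ j ∈ kidsF parent u, {e ∈ T | Anc parent j (f e)} := by
    ext e
    simp only [Set.mem_setOf_eq, Set.mem_union, Set.mem_iUnion, exists_prop]
    constructor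
    · rintro ⟨heT, hanc⟩
      rcases BD.anc_cases hT hanc with h | ⟨j, hj, hju, hjanc⟩
      · exact Or.inl ⟨heT, h⟩
      · exact Or.inr ⟨j, mem_kidsF.2 ⟨hj, hju⟩, heT, hjanc⟩
    · rintro (⟨heT, h⟩ | ⟨j, hjmem, heT, hjanc⟩)
      · exact ⟨heT, h ▸ BD.anc_refl (f e)⟩
      · obtain ⟨hj, _⟩ := mem_kidsF.1 hjmem
        exact ⟨heT, BD.anc_trans (hj ▸ BD.anc_parent) hjanc⟩
  rw [hseteq]
  have hfin1 : ∀ (S : Set α), S ⊆ T → S.Finite := fun S hS => hTfin.subset hS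
  have hfinU : (⋃ j ∈ kidsF parent u, {e ∈ T | Anc parent j (f e)}).Finite := by
    apply hTfin.subset
    intro e he
    simp only [Set.mem_iUnion, exists_prop] at he
    obtain ⟨j, _, he, _⟩ := he
    exact he
  have hd : Disjoint {e ∈ T | f e = u} (⋃ j ∈ kidsF parent u, {e ∈ T | Anc parent j (f e)}) := by
    apply Set.disjoint_iUnion_right.2
    intro j
    apply Set.disjoint_iUnion_right.2
    intro hjmem
    obtain ⟨hj, hju⟩ := mem_kidsF.1 hjmem
    rw [Set.disjoint_left]
    rintro e ⟨_, hfe⟩ ⟨_, hanc⟩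
    exact BD.not_anc_kid hT hj hju (hfe ▸ hanc)
  rw [Set.ncard_union_eq hd (hfin1 _ (Set.sep_subset _ _)) hfinU]
  congr 1
  apply ncard_biUnion _ _ (fun j => hfin1 _ (Set.sep_subset _ _))
  intro i hi j hj hij
  obtain ⟨hi1, hi2⟩ := mem_kidsF.1 hi
  obtain ⟨hj1, hj2⟩ := mem_kidsF.1 hj
  rw [Set.disjoint_left]
  rintro e ⟨_, hanci⟩ ⟨_, hancj⟩
  exact BD.kids_disjoint hT hi1 hi2 hj1 hj2 hij hanci hancj

lemma vert_partition [Finite V] (hT : IsRootedTree root parent) (u : V) (hu : u ≠ root) :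
    {v : V | Anc parent u v ∧ v ≠ root}.ncard =
      1 + ∑ j ∈ kidsF parent u, {v : V | Anc parent j v ∧ v ≠ root}.ncard := by
  have hseteq : {v : V | Anc parent u v ∧ v ≠ root} =
      {u} ∪ ⋃ j ∈ kidsF parent u, {v : V | Anc parent j v ∧ v ≠ root} := by
    ext v
    simp only [Set.mem_setOf_eq, Set.mem_union, Set.mem_singleton_iff, Set.mem_iUnion, exists_prop]
    constructor
    · rintro ⟨hanc, hvr⟩
      rcases BD.anc_cases hT hanc with h | ⟨j, hj, hju, hjanc⟩
      · exact Or.inl h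
      · exact Or.inr ⟨j, mem_kidsF.2 ⟨hj, hju⟩, hjanc, hvr⟩
    · rintro (h | ⟨j, hjmem, hjanc, hvr⟩)
      · subst h; exact ⟨BD.anc_refl v, hu⟩
      · obtain ⟨hj, _⟩ := mem_kidsF.1 hjmem
        exact ⟨BD.anc_trans (hj ▸ BD.anc_parent) hjanc, hvr⟩
  rw [hseteq]
  have hd : Disjoint ({u} : Set V) (⋃ j ∈ kidsF parent u, {v : V | Anc parent j v ∧ v ≠ root}) := by
    apply Set.disjoint_iUnion_right.2
    intro j
    apply Set.disjoint_iUnion_right.2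
    intro hjmem
    obtain ⟨hj, hju⟩ := mem_kidsF.1 hjmem
    rw [Set.disjoint_left]
    rintro v hv ⟨hanc, _⟩
    rw [Set.mem_singleton_iff] at hv
    exact BD.not_anc_kid hT hj hju (hv ▸ hanc)
  rw [Set.ncard_union_eq hd (Set.finite_singleton u) (Set.toFinite _)]
  rw [Set.ncard_singleton]
  congr 1
  apply ncard_biUnion _ _ (fun j => Set.toFinite _)
  intro i hi j hj hij
  obtain ⟨hi1, hi2⟩ := mem_kidsF.1 hi
  obtain ⟨hj1, hj2⟩ := mem_kidsF.1 hj
  rw [Set.disjoint_left]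
  rintro v ⟨hanci, _⟩ ⟨hancj, _⟩
  exact BD.kids_disjoint hT hi1 hi2 hj1 hj2 hij hanci hancj

lemma vert_partition_root [Finite V] (hT : IsRootedTree root parent) :
    {v : V | v ≠ root}.ncard =
      ∑ j ∈ kidsF parent root, {v : V | Anc parent j v ∧ v ≠ root}.ncard := by
  have hseteq : {v : V | v ≠ root} =
      ⋃ j ∈ kidsF parent root, {v : V | Anc parent j v ∧ v ≠ root} := by
    ext v
    simp only [Set.mem_setOf_eq, Set.mem_iUnion, exists_prop]
    constructor
    · intro hvr
      have hanc : Anc parent root v := hT.2 v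
      rcases BD.anc_cases hT hanc with h | ⟨j, hj, hju, hjanc⟩
      · exact absurd h hvr
      · exact ⟨j, mem_kidsF.2 ⟨hj, hju⟩, hjanc, hvr⟩
    · rintro ⟨j, _, _, hvr⟩
      exact hvr
  rw [hseteq]
  apply ncard_biUnion _ _ (fun j => Set.toFinite _)
  intro i hi j hj hij
  obtain ⟨hi1, hi2⟩ := mem_kidsF.1 hi
  obtain ⟨hj1, hj2⟩ := mem_kidsF.1 hj
  rw [Set.disjoint_left]
  rintro v ⟨hanci, _⟩ ⟨hancj, _⟩
  exact BD.kids_disjoint hT hi1 hi2 hj1 hj2 hij hanci hancj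

end BD3

namespace BD4
open Set

variable {α : Type} {M : Matroid α} [M.Finite] {X Y I : Set α}

lemma mrank_set_bdd (M : Matroid α) [M.Finite] (X : Set α) :
    ∀ n ∈ {n : ℕ | ∃ I : Set α, I ⊆ X ∧ M.Indep I ∧ I.ncard = n}, n ≤ M.E.ncard := by
  rintro n ⟨I, _, hI, rfl⟩
  exact Set.ncard_le_ncard hI.subset_ground M.ground_finite

lemma mrank_set_nonempty (M : Matroid α) (X : Set α) :
    (0 : ℕ) ∈ {n : ℕ | ∃ I : Set α, I ⊆ X ∧ M.Indep I ∧ I.ncard = n} :=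
  ⟨∅, Set.empty_subset _, M.empty_indep, Set.ncard_empty _⟩

lemma le_mrank (hI : M.Indep I) (hIX : I ⊆ X) : I.ncard ≤ mrank M X :=
  le_csSup ⟨M.E.ncard, mrank_set_bdd M X⟩ ⟨I, hIX, hI, rfl⟩

lemma exists_indep_mrank (M : Matroid α) [M.Finite] (X : Set α) :
    ∃ I : Set α, I ⊆ X ∧ M.Indep I ∧ I.ncard = mrank M X := by
  have := Nat.sSup_mem ⟨0, mrank_set_nonempty M X⟩ ⟨M.E.ncard, mrank_set_bdd M X⟩
  exact this

lemma mrank_le (hm : ∀ I : Set α, I ⊆ X → M.Indep I → I.ncard ≤ n) : mrank M X ≤ n := by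
  apply csSup_le ⟨0, mrank_set_nonempty M X⟩
  rintro m ⟨I, hIX, hI, rfl⟩
  exact hm I hIX hI

lemma mrank_mono (h : X ⊆ Y) : mrank M X ≤ mrank M Y := by
  obtain ⟨I, hIX, hI, hcard⟩ := exists_indep_mrank M X
  rw [← hcard]
  exact le_mrank hI (hIX.trans h)

lemma mrank_indep (hI : M.Indep I) : mrank M I = I.ncard := by
  apply le_antisymm
  · exact mrank_le (fun J hJ _ =>
      Set.ncard_le_ncard hJ (M.ground_finite.subset hI.subset_ground))
  · exact le_mrank hI subset_rfl

lemma indep_of_mrank_eq (hX : X ⊆ M.E) (h : X.ncard ≤ mrank M X) : M.Indep X := by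
  obtain ⟨I, hIX, hI, hcard⟩ := exists_indep_mrank M X
  have hfin : X.Finite := M.ground_finite.subset hX
  have : I = X := Set.eq_of_subset_of_ncard_le hIX (by omega) hfin
  exact this ▸ hI

lemma mrank_basis (hB : M.IsBasis I X) : mrank M X = I.ncard := by
  apply le_antisymm
  · apply mrank_le
    intro J hJX hJ
    by_contra hlt
    push_neg at hlt
    have hfinI : I.Finite := M.ground_finite.subset hB.indep.subset_ground
    have hfinJ : J.Finite := M.ground_finite.subset hJ.subset_ground
    have henc : I.encard < J.encard := by
      rw [hfinI.encard_eq_coe_toFinset_card, hfinJ.encard_eq_coe_toFinset_card,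
        ← Set.ncard_eq_toFinset_card _ hfinI, ← Set.ncard_eq_toFinset_card _ hfinJ]
      exact_mod_cast hlt
    obtain ⟨x, hx, hxi⟩ := hB.indep.augment hJ henc
    have hxX : x ∈ X := hJX hx.1
    have := hB.mem_of_insert_indep hxX hxi
    exact hx.2 this
  · exact le_mrank hB.indep hB.subset

lemma mrank_submod (hX : X ⊆ M.E) (hY : Y ⊆ M.E) :
    mrank M (X ∪ Y) + mrank M (X ∩ Y) ≤ mrank M X + mrank M Y := by
  obtain ⟨I, hIbasis⟩ := M.exists_isBasis (X ∩ Y) ((Set.inter_subset_left).trans hX)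
  obtain ⟨J, hJbasis, hIJ⟩ := hIbasis.indep.subset_isBasis_of_subset
      (hIbasis.subset.trans (Set.inter_subset_left.trans Set.subset_union_left))
      (Set.union_subset hX hY)
  have hJfin : J.Finite := M.ground_finite.subset hJbasis.indep.subset_ground
  have h1 : mrank M (X ∪ Y) = J.ncard := mrank_basis hJbasis
  have h2 : mrank M (X ∩ Y) = I.ncard := mrank_basis hIbasis
  have h3 : (J ∩ X).ncard ≤ mrank M X := le_mrank (hJbasis.indep.subset inter_subset_left)
    inter_subset_right
  have h4 : (J ∩ Y).ncard ≤ mrank M Y := le_mrank (hJbasis.indep.subset inter_subset_left)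
    inter_subset_right
  have hIeq : J ∩ (X ∩ Y) = I := by
    apply (hIbasis.eq_of_subset_indep (hJbasis.indep.subset inter_subset_left)
      (subset_inter hIJ hIbasis.subset) inter_subset_right).symm
  have hcard : (J ∩ X).ncard + (J ∩ Y).ncard = J.ncard + I.ncard := by
    have hu : (J ∩ X) ∪ (J ∩ Y) = J := by
      rw [← Set.inter_union_distrib_left]
      exact Set.inter_eq_self_of_subset_left hJbasis.subset
    have hi : (J ∩ X) ∩ (J ∩ Y) = I := by
      rw [← hIeq]; ext x; simp [Set.mem_inter_iff]; tauto
    have := Set.ncard_union_add_ncard_inter (J ∩ X) (J ∩ Y)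
      (hJfin.subset inter_subset_left) (hJfin.subset inter_subset_left)
    rw [hu, hi] at this
    omega
  omega

end BD4
namespace BD5
open BD BD2 BD3 BD4

variable {α V : Type}

noncomputable def cnt (parent : V → V) (f : α → V) (T : Set α) (u : V) : ℕ :=
  {e ∈ T | Anc parent u (f e)}.ncard

noncomputable def zc (f : α → V) (T : Set α) (u : V) : ℕ := {e ∈ T | f e = u}.ncard

noncomputable def ddn (root : V) (parent : V → V) (u : V) : ℕ :=
  {v : V | Anc parent u v ∧ v ≠ root}.ncard

section Core

variable {M : Matroid α} [M.Finite] [Finite V] {C K : Set α} {d : ℕ}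
  {root : V} {parent : V → V} {f : α → V}

/-- The basic complement bound: for any vertex `u`,
if `cnt C u = 0`, then `ddn u ≤ cnt K u`;  (diamond0)
if `1 ≤ cnt C u`, then `ddn u + 1 ≤ cnt C u + cnt K u`  (diamond1). -/
lemma diamond_aux
    (hT : IsRootedTree root parent)
    (hcond : ∀ X : Set α, X ⊆ M.E →
      mrank M X ≤ Set.ncard {v : V | v ≠ root ∧ ∃ e ∈ X, Anc parent v (f e)})
    (hCE : C ⊆ M.E) (hKE : K ⊆ M.E)
    (hdisj : Disjoint C K) (hd : C.ncard = d)
    (hWc : {v : V | v ≠ root}.ncard + 1 = d + K.ncard)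
    (hIndepExt : ∀ A, A ⊆ C → A ≠ C → ∀ Bs, Bs ⊆ K → M.Indep (A ∪ Bs))
    (hCne : C.Nonempty)
    (u : V) (A : Set α) (hA : A ⊆ C) (hAne : A ≠ C)
    (hAout : ∀ e ∈ A, ¬ Anc parent u (f e)) :
    A.ncard + (K.ncard - cnt parent f K u) + ddn root parent u ≤ {v : V | v ≠ root}.ncard := by
  classical
  have hCfin : C.Finite := M.ground_finite.subset hCE
  have hKfin : K.Finite := M.ground_finite.subset hKE
  set Bs : Set α := K \ {e ∈ K | Anc parent u (f e)} with hBs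
  have hBsK : Bs ⊆ K := Set.diff_subset
  have hind : M.Indep (A ∪ Bs) := hIndepExt A hA hAne Bs hBsK
  have hXE : A ∪ Bs ⊆ M.E := Set.union_subset (hA.trans hCE) (hBsK.trans hKE)
  have hBscard : Bs.ncard + cnt parent f K u = K.ncard := by
    rw [hBs, cnt]
    exact Set.ncard_diff_add_ncard_of_subset (Set.sep_subset _ _) hKfin
  have hdisjAB : Disjoint A Bs := Set.disjoint_of_subset hA hBsK hdisj
  have hrankX : mrank M (A ∪ Bs) = A.ncard + Bs.ncard := by
    rw [mrank_indep hind, Set.ncard_union_eq hdisjAB (hCfin.subset hA) (hKfin.subset hBsK)]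
  have hTsub : {v : V | v ≠ root ∧ ∃ e ∈ A ∪ Bs, Anc parent v (f e)} ⊆
      {v : V | v ≠ root} \ {v : V | Anc parent u v ∧ v ≠ root} := by
    rintro v ⟨hvr, e, heX, hanc⟩
    refine ⟨hvr, ?_⟩
    rintro ⟨hancuv, -⟩
    have hancu : Anc parent u (f e) := BD.anc_trans hancuv hanc
    rcases heX with heA | heB
    · exact hAout e heA hancu
    · exact heB.2 ⟨heB.1, hancu⟩
  have hWD : ({v : V | v ≠ root} \ {v : V | Anc parent u v ∧ v ≠ root}).ncard
      + ddn root parent u = {v : V | v ≠ root}.ncard := by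
    rw [ddn]
    exact Set.ncard_diff_add_ncard_of_subset (fun v hv => hv.2) (Set.toFinite _)
  have hchain := hcond (A ∪ Bs) hXE
  have hle : mrank M (A ∪ Bs) ≤
      ({v : V | v ≠ root} \ {v : V | Anc parent u v ∧ v ≠ root}).ncard :=
    hchain.trans (Set.ncard_le_ncard hTsub (Set.toFinite _))
  have hcntK : cnt parent f K u ≤ K.ncard := by
    rw [cnt]; exact Set.ncard_le_ncard (Set.sep_subset _ _) hKfin
  omega

lemma diamond0
    (hT : IsRootedTree root parent)
    (hcond : ∀ X : Set α, X ⊆ M.E →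
      mrank M X ≤ Set.ncard {v : V | v ≠ root ∧ ∃ e ∈ X, Anc parent v (f e)})
    (hCE : C ⊆ M.E) (hKE : K ⊆ M.E)
    (hdisj : Disjoint C K) (hd : C.ncard = d) (hd2 : 2 ≤ d)
    (hWc : {v : V | v ≠ root}.ncard + 1 = d + K.ncard)
    (hIndepExt : ∀ A, A ⊆ C → A ≠ C → ∀ Bs, Bs ⊆ K → M.Indep (A ∪ Bs))
    (hCne : C.Nonempty)
    (u : V) (h0 : cnt parent f C u = 0) :
    ddn root parent u ≤ cnt parent f K u := by
  classical
  have hCfin : C.Finite := M.ground_finite.subset hCE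
  obtain ⟨e₀, he₀⟩ := hCne
  have hAne : C \ {e₀} ≠ C := by
    intro h
    have : e₀ ∈ C \ {e₀} := h.symm ▸ he₀
    simp at this
  have hAcard : (C \ {e₀}).ncard + 1 = d := by
    rw [← hd]
    exact Set.ncard_diff_singleton_add_one he₀ hCfin
  have hAout : ∀ e ∈ C \ {e₀}, ¬ Anc parent u (f e) := by
    intro e he hanc
    have : e ∈ {e ∈ C | Anc parent u (f e)} := ⟨he.1, hanc⟩
    have hne : {e ∈ C | Anc parent u (f e)}.ncard ≠ 0 :=
      Set.ncard_ne_zero_of_mem this (hCfin.subset (Set.sep_subset _ _))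
    rw [cnt] at h0
    exact hne h0
  have key := diamond_aux hT hcond hCE hKE hdisj hd hWc hIndepExt ⟨e₀, he₀⟩ u
    (C \ {e₀}) Set.diff_subset hAne hAout
  have hcntK : cnt parent f K u ≤ K.ncard := by
    rw [cnt]; exact Set.ncard_le_ncard (Set.sep_subset _ _) (M.ground_finite.subset hKE)
  omega

lemma diamond1
    (hT : IsRootedTree root parent)
    (hcond : ∀ X : Set α, X ⊆ M.E →
      mrank M X ≤ Set.ncard {v : V | v ≠ root ∧ ∃ e ∈ X, Anc parent v (f e)})
    (hCE : C ⊆ M.E) (hKE : K ⊆ M.E)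
    (hdisj : Disjoint C K) (hd : C.ncard = d)
    (hWc : {v : V | v ≠ root}.ncard + 1 = d + K.ncard)
    (hIndepExt : ∀ A, A ⊆ C → A ≠ C → ∀ Bs, Bs ⊆ K → M.Indep (A ∪ Bs))
    (hCne : C.Nonempty)
    (u : V) (h1 : 1 ≤ cnt parent f C u) :
    ddn root parent u + 1 ≤ cnt parent f C u + cnt parent f K u := by
  classical
  have hCfin : C.Finite := M.ground_finite.subset hCE
  set A : Set α := C \ {e ∈ C | Anc parent u (f e)} with hA
  have hScne : {e ∈ C | Anc parent u (f e)}.Nonempty := by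
    rw [← Set.ncard_pos (hCfin.subset (Set.sep_subset _ _))]
    rw [cnt] at h1; omega
  obtain ⟨e₁, he₁⟩ := hScne
  have hAne : A ≠ C := by
    intro h
    have : e₁ ∈ A := h.symm ▸ he₁.1
    exact this.2 he₁
  have hAcard : A.ncard + cnt parent f C u = d := by
    rw [hA, cnt, ← hd]
    exact Set.ncard_diff_add_ncard_of_subset (Set.sep_subset _ _) hCfin
  have hAout : ∀ e ∈ A, ¬ Anc parent u (f e) := by
    rintro e he hanc
    exact he.2 ⟨he.1, hanc⟩
  have key := diamond_aux hT hcond hCE hKE hdisj hd hWc hIndepExt hCne u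
    A Set.diff_subset hAne hAout
  have hcntK : cnt parent f K u ≤ K.ncard := by
    rw [cnt]; exact Set.ncard_le_ncard (Set.sep_subset _ _) (M.ground_finite.subset hKE)
  have hcntC : cnt parent f C u ≤ d := by
    rw [cnt, ← hd]; exact Set.ncard_le_ncard (Set.sep_subset _ _) hCfin
  omega

end Core
end BD5
namespace BD5
open BD BD2 BD3 BD4

section ClaimA

variable {α V : Type} {M : Matroid α} [M.Finite] [Finite V] {C K : Set α} {d : ℕ}
  {root : V} {parent : V → V} {f : α → V}

lemma claimA
    (hT : IsRootedTree root parent)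
    (hcond : ∀ X : Set α, X ⊆ M.E →
      mrank M X ≤ Set.ncard {v : V | v ≠ root ∧ ∃ e ∈ X, Anc parent v (f e)})
    (hCE : C ⊆ M.E) (hKE : K ⊆ M.E)
    (hdisj : Disjoint C K) (hd : C.ncard = d) (hd2 : 2 ≤ d)
    (hWc : {v : V | v ≠ root}.ncard + 1 = d + K.ncard)
    (hIndepExt : ∀ A, A ⊆ C → A ≠ C → ∀ Bs, Bs ⊆ K → M.Indep (A ∪ Bs))
    (hCne : C.Nonempty) :
    ∀ N : ℕ, ∀ u : V, u ≠ root → ddn root parent u ≤ N →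
      cnt parent f C u + 1 ≤ d →
      cnt parent f C u + ddn root parent u
          * 2 ^ (treeDepth root parent - vdepth root parent u)
        ≤ (cnt parent f C u + cnt parent f K u + 1)
          * 2 ^ (treeDepth root parent - vdepth root parent u) := by
  classical
  have hCfin : C.Finite := M.ground_finite.subset hCE
  have hKfin : K.Finite := M.ground_finite.subset hKE
  set h := treeDepth root parent with hh
  intro N
  induction N with
  | zero =>
    intro u hu hN _
    exfalso
    have : u ∈ {v : V | Anc parent u v ∧ v ≠ root} := ⟨BD.anc_refl u, hu⟩
    have := Set.ncard_ne_zero_of_mem this (Set.toFinite _)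
    rw [ddn] at hN
    omega
  | succ N ih =>
    intro u hu hN hcd
    set a := vdepth root parent u with ha
    have hah : a ≤ h := hh ▸ BD.vdepth_le_treeDepth u
    -- partition identities
    have hcC : cnt parent f C u = zc f C u + ∑ j ∈ kidsF parent u, cnt parent f C j :=
      count_partition hT f C hCfin u
    have hcK : cnt parent f K u = zc f K u + ∑ j ∈ kidsF parent u, cnt parent f K j :=
      count_partition hT f K hKfin u
    have hdd : ddn root parent u = 1 + ∑ j ∈ kidsF parent u, ddn root parent j :=
      vert_partition hT u hu
    -- per-kid inequality
    have hkid : ∀ j ∈ kidsF parent u,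
        cnt parent f C j + ddn root parent j * 2 ^ (h - a)
          ≤ (cnt parent f C j + cnt parent f K j) * 2 ^ (h - a) := by
      intro j hj
      obtain ⟨hpj, hju⟩ := mem_kidsF.1 hj
      have hjr : j ≠ root := by
        intro hroot; subst hroot; rw [hT.1] at hpj; exact hju hpj
      have hvj : vdepth root parent j = a + 1 := BD.vdepth_kid hT hpj hju
      have hjh : a + 1 ≤ h := by
        have := hh ▸ BD.vdepth_le_treeDepth (root := root) (parent := parent) j
        omega
      -- kid descendant count is smaller
      have hDsub : {v : V | Anc parent j v ∧ v ≠ root} ⊆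
          {v : V | Anc parent u v ∧ v ≠ root} \ {u} := by
        rintro v ⟨hanc, hvr⟩
        refine ⟨⟨BD.anc_trans (hpj ▸ BD.anc_parent) hanc, hvr⟩, ?_⟩
        intro hvu
        subst hvu
        exact BD.not_anc_kid hT hpj hju hanc
      have hddj : ddn root parent j ≤ N := by
        have h1 : ddn root parent j ≤
            ({v : V | Anc parent u v ∧ v ≠ root} \ {u}).ncard := by
          rw [ddn]; exact Set.ncard_le_ncard hDsub (Set.toFinite _)
        have hmem : u ∈ {v : V | Anc parent u v ∧ v ≠ root} := ⟨BD.anc_refl u, hu⟩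
        have h2 : ({v : V | Anc parent u v ∧ v ≠ root} \ {u}).ncard + 1
            = {v : V | Anc parent u v ∧ v ≠ root}.ncard :=
          Set.ncard_diff_singleton_add_one hmem (Set.toFinite _)
        rw [ddn] at hN
        omega
      have hcCj : cnt parent f C j ≤ cnt parent f C u := by
        rw [cnt, cnt]
        apply Set.ncard_le_ncard _ (hCfin.subset (Set.sep_subset _ _))
        rintro e ⟨heC, hanc⟩
        exact ⟨heC, BD.anc_trans (hpj ▸ BD.anc_parent) hanc⟩
      rcases Nat.eq_zero_or_pos (cnt parent f C j) with h0 | h1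
      · -- kid entirely without circuit elements
        have hdk := diamond0 hT hcond hCE hKE hdisj hd hd2 hWc hIndepExt hCne j h0
        rw [h0]
        simp only [Nat.zero_add]
        exact Nat.mul_le_mul_right _ hdk
      · -- kid carrying circuit elements
        have hdk := diamond1 hT hcond hCE hKE hdisj hd hWc hIndepExt hCne j h1
        have hIH := ih j hjr hddj (by omega)
        rw [hvj] at hIH
        have hpow : 2 ^ (h - a) = 2 * 2 ^ (h - (a + 1)) := by
          have hq : h - a = (h - (a + 1)) + 1 := by omega
          rw [hq, pow_succ]; ring
        set Q := 2 ^ (h - (a + 1)) with hQ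
        set n := cnt parent f C j + cnt parent f K j with hn
        rw [hpow]
        calc cnt parent f C j + ddn root parent j * (2 * Q)
            = (cnt parent f C j + ddn root parent j * Q) + ddn root parent j * Q := by ring
          _ ≤ (n + 1) * Q + ddn root parent j * Q := by
              exact Nat.add_le_add_right hIH _
          _ = n * Q + (1 + ddn root parent j) * Q := by ring
          _ ≤ n * Q + n * Q := by
              have : (1 + ddn root parent j) ≤ n := by omega
              exact Nat.add_le_add_left (Nat.mul_le_mul_right _ this) _
          _ = n * (2 * Q) := by ring
    -- sum over kids
    have hsum : (∑ j ∈ kidsF parent u, cnt parent f C j)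
        + (∑ j ∈ kidsF parent u, ddn root parent j) * 2 ^ (h - a)
        ≤ ((∑ j ∈ kidsF parent u, cnt parent f C j)
           + (∑ j ∈ kidsF parent u, cnt parent f K j)) * 2 ^ (h - a) := by
      have h1 := Finset.sum_le_sum hkid
      rw [Finset.sum_add_distrib, ← Finset.sum_mul, ← Finset.sum_mul,
        Finset.sum_add_distrib] at h1
      exact h1
    -- assemble
    set SC := ∑ j ∈ kidsF parent u, cnt parent f C j with hSC
    set SK := ∑ j ∈ kidsF parent u, cnt parent f K j with hSK
    set SD := ∑ j ∈ kidsF parent u, ddn root parent j with hSD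
    set P := 2 ^ (h - a) with hP
    have hzc : zc f C u ≤ (zc f C u + zc f K u) * P := by
      have hP1 : 1 ≤ P := Nat.one_le_two_pow
      calc zc f C u ≤ (zc f C u + zc f K u) * 1 := by omega
        _ ≤ (zc f C u + zc f K u) * P := Nat.mul_le_mul_left _ hP1
    have goal_eq1 : cnt parent f C u + ddn root parent u * P
        = zc f C u + SC + (P + SD * P) := by
      rw [hcC, hdd]; ring
    have goal_eq2 : (cnt parent f C u + cnt parent f K u + 1) * P
        = (zc f C u + zc f K u) * P + (SC + SK) * P + P := by
      rw [hcC, hcK]; ring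
    rw [goal_eq1, goal_eq2]
    have hsum' : SC + SD * P ≤ (SC + SK) * P := hsum
    linarith

end ClaimA
end BD5
namespace BD5
open BD BD2 BD3 BD4

section Final

variable {α V : Type} {M : Matroid α} [M.Finite] [Finite V] {C K : Set α} {d : ℕ}
  {root : V} {parent : V → V} {f : α → V}

lemma kid_bound
    (hT : IsRootedTree root parent)
    (hcond : ∀ X : Set α, X ⊆ M.E →
      mrank M X ≤ Set.ncard {v : V | v ≠ root ∧ ∃ e ∈ X, Anc parent v (f e)})
    (hCE : C ⊆ M.E) (hKE : K ⊆ M.E)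
    (hdisj : Disjoint C K) (hd : C.ncard = d) (hd2 : 2 ≤ d)
    (hWc : {v : V | v ≠ root}.ncard + 1 = d + K.ncard)
    (hIndepExt : ∀ A, A ⊆ C → A ≠ C → ∀ Bs, Bs ⊆ K → M.Indep (A ∪ Bs))
    (hCne : C.Nonempty)
    (j : V) (hjr : j ≠ root) (hlt : cnt parent f C j + 1 ≤ d)
    (hjh : vdepth root parent j ≤ treeDepth root parent) :
    cnt parent f C j + ddn root parent j
        * 2 ^ (treeDepth root parent - vdepth root parent j + 1)
      ≤ (cnt parent f C j + cnt parent f K j)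
        * 2 ^ (treeDepth root parent - vdepth root parent j + 1) := by
  set h := treeDepth root parent
  set a := vdepth root parent j
  rcases Nat.eq_zero_or_pos (cnt parent f C j) with h0 | h1
  · have hdk := diamond0 hT hcond hCE hKE hdisj hd hd2 hWc hIndepExt hCne j h0
    rw [h0]
    simp only [Nat.zero_add]
    exact Nat.mul_le_mul_right _ hdk
  · have hdk := diamond1 hT hcond hCE hKE hdisj hd hWc hIndepExt hCne j h1
    have hIH := claimA hT hcond hCE hKE hdisj hd hd2 hWc hIndepExt hCne
      (ddn root parent j) j hjr le_rfl hlt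
    set Q := 2 ^ (h - a) with hQ
    have hpow : 2 ^ (h - a + 1) = 2 * Q := by rw [pow_succ]; ring
    set n := cnt parent f C j + cnt parent f K j with hn
    rw [hpow]
    calc cnt parent f C j + ddn root parent j * (2 * Q)
        = (cnt parent f C j + ddn root parent j * Q) + ddn root parent j * Q := by ring
      _ ≤ (n + 1) * Q + ddn root parent j * Q := Nat.add_le_add_right hIH _
      _ = n * Q + (1 + ddn root parent j) * Q := by ring
      _ ≤ n * Q + n * Q := by
          have : (1 + ddn root parent j) ≤ n := by omega
          exact Nat.add_le_add_left (Nat.mul_le_mul_right _ this) _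
      _ = n * (2 * Q) := by ring

end Final
end BD5
/-- If a finite matroid `M` has a circuit of size `d`, then every
depth-decomposition of `M` of depth `h` satisfies `2 ^ h ≥ d`; in particular the
branch-depth of `M` is at least `log₂ d`. -/
theorem circuit_size_le_two_pow_depth {α V : Type} (M : Matroid α) [M.Finite]
    (C : Set α) (d : ℕ) (hC : IsCircuitOf M C) (hd : C.ncard = d)
    (root : V) (parent : V → V) (f : α → V)
    (h : IsDepthDecomp M root parent f) :
    d ≤ 2 ^ treeDepth root parent := by
  classical
  obtain ⟨hfinV, hT, hrank, hcond⟩ := h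
  haveI : Finite V := hfinV
  rcases le_or_gt d 1 with hd1 | hd2'
  · exact hd1.trans Nat.one_le_two_pow
  have hd2 : 2 ≤ d := hd2'
  set h := treeDepth root parent with hh
  -- circuit basics
  have hCE : C ⊆ M.E := hC.1.subset_ground
  have hCfin : C.Finite := M.ground_finite.subset hCE
  have hCne : C.Nonempty := by
    rw [← Set.ncard_pos hCfin]; omega
  have hproper : ∀ A, A ⊆ C → A ≠ C → M.Indep A := by
    intro A hA hAne
    by_contra hni
    exact hAne (hC.2 A ⟨hni, hA.trans hCE⟩ hA)
  obtain ⟨e₀, he₀⟩ := hCne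
  have hJne : C \ {e₀} ≠ C := by
    intro hcontra
    have : e₀ ∈ C \ {e₀} := hcontra.symm ▸ he₀
    simp at this
  have hJind : M.Indep (C \ {e₀}) := hproper _ Set.diff_subset hJne
  have hJbasis : M.IsBasis (C \ {e₀}) C := by
    apply hJind.isBasis_of_forall_insert Set.diff_subset
    intro e he
    have he' : e = e₀ := by
      rcases he with ⟨heC, heJ⟩
      by_contra hne
      exact heJ ⟨heC, hne⟩
    subst he'
    rw [Set.insert_diff_singleton, Set.insert_eq_self.2 he₀]
    exact hC.1
  obtain ⟨B, hBbasis, hJB⟩ := hJind.subset_isBasis_of_subset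
    (hJind.subset_ground) (subset_refl M.E)
  set K := B \ (C \ {e₀}) with hK
  have hBE : B ⊆ M.E := hBbasis.indep.subset_ground
  have hKE : K ⊆ M.E := Set.diff_subset.trans hBE
  have hKfin : K.Finite := M.ground_finite.subset hKE
  have hBeq : B = (C \ {e₀}) ∪ K := (Set.union_diff_cancel hJB).symm
  have hdisjJK : Disjoint (C \ {e₀}) K := Set.disjoint_sdiff_right
  have hdisjCK : Disjoint C K := by
    rw [Set.disjoint_left]
    intro x hxC hxK
    have hxe : x = e₀ := by
      by_contra hne
      exact hxK.2 ⟨hxC, hne⟩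
    subst hxe
    have hCB : C ⊆ B := by
      intro y hy
      by_cases hyx : y = x
      · subst hyx; exact hxK.1
      · exact hJB ⟨hy, hyx⟩
    exact hC.1.not_indep (hBbasis.indep.subset hCB)
  have hJcard : (C \ {e₀}).ncard + 1 = d := by
    rw [← hd]; exact Set.ncard_diff_singleton_add_one he₀ hCfin
  have hWc : {v : V | v ≠ root}.ncard + 1 = d + K.ncard := by
    have h1 : mrank M M.E = B.ncard := BD4.mrank_basis hBbasis
    have h2 : B.ncard = (C \ {e₀}).ncard + K.ncard := by
      rw [hBeq]
      exact Set.ncard_union_eq hdisjJK (hCfin.subset Set.diff_subset) hKfin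
    rw [hrank] at h1
    omega
  have hIndepExt : ∀ A, A ⊆ C → A ≠ C → ∀ Bs, Bs ⊆ K → M.Indep (A ∪ Bs) := by
    intro A hA hAne Bs hBs
    have hAind := hproper A hA hAne
    have hAE : A ⊆ M.E := hA.trans hCE
    have hBsE : Bs ⊆ M.E := hBs.trans hKE
    have hXE : A ∪ Bs ⊆ M.E := Set.union_subset hAE hBsE
    have hsub := BD4.mrank_submod (M := M) hXE hCE
    have hdisjABs : Disjoint A Bs := Set.disjoint_of_subset hA hBs hdisjCK
    have hXint : (A ∪ Bs) ∩ C = A := by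
      ext x
      constructor
      · rintro ⟨hx | hx, hxC⟩
        · exact hx
        · exact absurd hxC (Set.disjoint_right.1 hdisjCK (hBs hx))
      · intro hx
        exact ⟨Or.inl hx, hA hx⟩
    have hXun : (A ∪ Bs) ∪ C = C ∪ Bs := by
      ext x
      constructor
      · rintro ((hx | hx) | hx)
        · exact Or.inl (hA hx)
        · exact Or.inr hx
        · exact Or.inl hx
      · rintro (hx | hx)
        · exact Or.inr hx
        · exact Or.inl (Or.inr hx)
    rw [hXint, hXun] at hsub
    have hJBsind : M.Indep ((C \ {e₀}) ∪ Bs) :=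
      hBbasis.indep.subset (Set.union_subset hJB (hBs.trans Set.diff_subset))
    have hJBscard : ((C \ {e₀}) ∪ Bs).ncard = (C \ {e₀}).ncard + Bs.ncard :=
      Set.ncard_union_eq (Set.disjoint_of_subset Set.diff_subset hBs hdisjCK)
        (hCfin.subset Set.diff_subset) (hKfin.subset hBs)
    have hlow : (C \ {e₀}).ncard + Bs.ncard ≤ mrank M (C ∪ Bs) := by
      rw [← hJBscard]
      exact BD4.le_mrank hJBsind
        (Set.union_subset (Set.diff_subset.trans Set.subset_union_left)
          Set.subset_union_right)
    have hCub : mrank M C + 1 ≤ d := by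
      have hub : mrank M C ≤ d - 1 := by
        apply BD4.mrank_le
        intro I hI hind
        have hIne : I ≠ C := fun hcontra => hC.1.not_indep (hcontra ▸ hind)
        have hss : I ⊂ C := Set.ssubset_iff_subset_ne.2 ⟨hI, hIne⟩
        have := Set.ncard_lt_ncard hss hCfin
        omega
      omega
    have hA_rank : mrank M A = A.ncard := BD4.mrank_indep hAind
    have hXcard : (A ∪ Bs).ncard = A.ncard + Bs.ncard :=
      Set.ncard_union_eq hdisjABs (hCfin.subset hA) (hKfin.subset hBs)
    apply BD4.indep_of_mrank_eq hXE
    omega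
  -- no element maps to the root
  have hfC : ∀ e ∈ C, f e ≠ root := by
    intro e he hroot
    have hne : ({e} : Set α) ≠ C := by
      intro hcontra
      rw [← hcontra] at hd
      simp at hd
      omega
    have hind : M.Indep {e} := hproper {e} (Set.singleton_subset_iff.2 he) hne
    have h1 : mrank M {e} = 1 := by rw [BD4.mrank_indep hind, Set.ncard_singleton]
    have h2 := hcond {e} (Set.singleton_subset_iff.2 (hCE he))
    have hempty : {v : V | v ≠ root ∧ ∃ e' ∈ ({e} : Set α), Anc parent v (f e')} = ∅ := by
      ext v
      simp only [Set.mem_setOf_eq, Set.mem_singleton_iff, exists_eq_left, Set.mem_empty_iff_false,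
        iff_false, not_and]
      intro hvr hanc
      rw [hroot] at hanc
      exact hvr (BD.anc_root hT hanc)
    rw [h1, hempty] at h2
    simp at h2
  have hfK : ∀ x ∈ K, f x ≠ root := by
    intro x hx hroot
    have hind : M.Indep {x} :=
      hBbasis.indep.subset (Set.singleton_subset_iff.2 (Set.diff_subset hx))
    have h1 : mrank M {x} = 1 := by rw [BD4.mrank_indep hind, Set.ncard_singleton]
    have h2 := hcond {x} (Set.singleton_subset_iff.2 (hKE hx))
    have hempty : {v : V | v ≠ root ∧ ∃ e' ∈ ({x} : Set α), Anc parent v (f e')} = ∅ := by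
      ext v
      simp only [Set.mem_setOf_eq, Set.mem_singleton_iff, exists_eq_left, Set.mem_empty_iff_false,
        iff_false, not_and]
      intro hvr hanc
      rw [hroot] at hanc
      exact hvr (BD.anc_root hT hanc)
    rw [h1, hempty] at h2
    simp at h2
  have hzC0 : ∀ u : V, (∀ e ∈ C, f e ≠ u) → BD5.zc f C u = 0 := by
    intro u hu
    rw [BD5.zc]
    have : {e ∈ C | f e = u} = ∅ := by
      ext e
      simp only [Set.mem_setOf_eq, Set.mem_empty_iff_false, iff_false, not_and]
      exact hu e
    rw [this, Set.ncard_empty]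
  -- case split on existence of a non-root vertex containing the whole circuit
  set Ω := {u : V | u ≠ root ∧ BD5.cnt parent f C u = d} with hΩdef
  by_cases hΩ : Ω.Nonempty
  · -- deepest such vertex
    obtain ⟨w, hwΩ, hwmax⟩ := Set.exists_max_image Ω (vdepth root parent) (Set.toFinite _) hΩ
    obtain ⟨hwr, hcCw⟩ := hwΩ
    set t := vdepth root parent w with htdef
    have hth : t ≤ h := hh ▸ BD.vdepth_le_treeDepth w
    have ht1 : 1 ≤ t := by
      rcases Nat.eq_zero_or_pos t with h0 | h1
      · exact absurd (BD.vdepth_eq_zero hT h0) hwr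
      · exact h1
    have hScw : {e ∈ C | Anc parent w (f e)} = C := by
      apply Set.eq_of_subset_of_ncard_le (Set.sep_subset _ _) _ hCfin
      rw [hd]
      rw [BD5.cnt] at hcCw
      omega
    -- the dagger bound : d + cnt K w ≤ ddn w + t
    have hdagger : d + BD5.cnt parent f K w ≤ BD5.ddn root parent w + t := by
      set X := {e ∈ C | Anc parent w (f e)} ∪ {e ∈ K | Anc parent w (f e)} with hXdef
      have hXE : X ⊆ M.E :=
        Set.union_subset ((Set.sep_subset _ _).trans hCE) ((Set.sep_subset _ _).trans hKE)
      have hBsK : {e ∈ K | Anc parent w (f e)} ⊆ K := Set.sep_subset _ _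
      have hABind : M.Indep ((C \ {e₀}) ∪ {e ∈ K | Anc parent w (f e)}) :=
        hIndepExt _ Set.diff_subset hJne _ hBsK
      have hABsub : (C \ {e₀}) ∪ {e ∈ K | Anc parent w (f e)} ⊆ X := by
        apply Set.union_subset
        · refine (Set.diff_subset.trans ?_).trans Set.subset_union_left
          rw [hScw]
        · exact Set.subset_union_right
      have hABcard : ((C \ {e₀}) ∪ {e ∈ K | Anc parent w (f e)}).ncard
          = (C \ {e₀}).ncard + BD5.cnt parent f K w := by
        rw [BD5.cnt]
        exact Set.ncard_union_eq (Set.disjoint_of_subset Set.diff_subset hBsK hdisjCK)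
          (hCfin.subset Set.diff_subset) (hKfin.subset hBsK)
      have hlow : (C \ {e₀}).ncard + BD5.cnt parent f K w ≤ mrank M X := by
        rw [← hABcard]
        exact BD4.le_mrank hABind hABsub
      have hup := hcond X hXE
      have hTsub : {v : V | v ≠ root ∧ ∃ e ∈ X, Anc parent v (f e)} ⊆
          {v : V | Anc parent w v ∧ v ≠ root}
            ∪ {v : V | Anc parent v w ∧ v ≠ w ∧ v ≠ root} := by
        rintro v ⟨hvr, e, heX, hanc⟩
        have hancw : Anc parent w (f e) := by
          rcases heX with he | he
          · exact he.2
          · exact he.2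
        rcases BD.anc_comparable hanc hancw with hvw | hwv
        · by_cases hveq : v = w
          · subst hveq
            exact Or.inl ⟨BD.anc_refl v, hvr⟩
          · exact Or.inr ⟨hvw, hveq, hvr⟩
        · exact Or.inl ⟨hwv, hvr⟩
      have hupcard : mrank M X ≤ BD5.ddn root parent w + (t - 1) := by
        calc mrank M X ≤ ({v : V | Anc parent w v ∧ v ≠ root}
            ∪ {v : V | Anc parent v w ∧ v ≠ w ∧ v ≠ root}).ncard :=
              hup.trans (Set.ncard_le_ncard hTsub (Set.toFinite _))
          _ ≤ BD5.ddn root parent w + {v : V | Anc parent v w ∧ v ≠ w ∧ v ≠ root}.ncard :=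
              Set.ncard_union_le _ _
          _ ≤ BD5.ddn root parent w + (t - 1) := by
              have := BD.strict_anc_card hT (root := root) w
              omega
      omega
    -- partition identities at w
    have hcCpart : BD5.cnt parent f C w
        = BD5.zc f C w + ∑ j ∈ BD3.kidsF parent w, BD5.cnt parent f C j :=
      BD3.count_partition hT f C hCfin w
    have hcKpart : BD5.cnt parent f K w
        = BD5.zc f K w + ∑ j ∈ BD3.kidsF parent w, BD5.cnt parent f K j :=
      BD3.count_partition hT f K hKfin w
    have hddpart : BD5.ddn root parent w
        = 1 + ∑ j ∈ BD3.kidsF parent w, BD5.ddn root parent j :=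
      BD3.vert_partition hT w hwr
    -- per-kid bound
    have hkid : ∀ j ∈ BD3.kidsF parent w,
        BD5.cnt parent f C j + BD5.ddn root parent j * 2 ^ (h - t)
          ≤ (BD5.cnt parent f C j + BD5.cnt parent f K j) * 2 ^ (h - t) := by
      intro j hj
      obtain ⟨hpj, hjw⟩ := BD3.mem_kidsF.1 hj
      have hjr : j ≠ root := by
        intro hroot; subst hroot; rw [hT.1] at hpj; exact hwr hpj.symm
      have hvj : vdepth root parent j = t + 1 := BD.vdepth_kid hT hpj hjw
      have hjh : vdepth root parent j ≤ h := hh ▸ BD.vdepth_le_treeDepth j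
      have hlt : BD5.cnt parent f C j + 1 ≤ d := by
        have hle : BD5.cnt parent f C j ≤ d := by
          rw [BD5.cnt, ← hd]
          exact Set.ncard_le_ncard (Set.sep_subset _ _) hCfin
        rcases Nat.lt_or_ge (BD5.cnt parent f C j) d with hlt' | hge
        · omega
        · exfalso
          have hjeq : BD5.cnt parent f C j = d := le_antisymm hle hge
          have hjΩ : j ∈ Ω := ⟨hjr, hjeq⟩
          have := hwmax j hjΩ
          rw [hvj] at this
          omega
      have := BD5.kid_bound hT hcond hCE hKE hdisjCK hd hd2 hWc hIndepExt ⟨e₀, he₀⟩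
        j hjr hlt hjh
      rw [hvj] at this
      have hexp : h - (t + 1) + 1 = h - t := by omega
      rwa [hexp] at this
    have hsum : (∑ j ∈ BD3.kidsF parent w, BD5.cnt parent f C j)
        + (∑ j ∈ BD3.kidsF parent w, BD5.ddn root parent j) * 2 ^ (h - t)
        ≤ ((∑ j ∈ BD3.kidsF parent w, BD5.cnt parent f C j)
           + (∑ j ∈ BD3.kidsF parent w, BD5.cnt parent f K j)) * 2 ^ (h - t) := by
      have h1 := Finset.sum_le_sum hkid
      rw [Finset.sum_add_distrib, ← Finset.sum_mul, ← Finset.sum_mul,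
        Finset.sum_add_distrib] at h1
      exact h1
    -- final arithmetic
    set a1 := ∑ j ∈ BD3.kidsF parent w, BD5.cnt parent f C j with ha1
    set b1 := ∑ j ∈ BD3.kidsF parent w, BD5.cnt parent f K j with hb1
    set s1 := ∑ j ∈ BD3.kidsF parent w, BD5.ddn root parent j with hs1
    set P := 2 ^ (h - t) with hP
    set zcw := BD5.zc f C w with hzcw
    set zkw := BD5.zc f K w with hzkw
    have e1 : zcw + a1 + (zkw + b1) ≤ 1 + s1 + t := by
      rw [hcCpart] at hcCw
      rw [hcKpart, hddpart] at hdagger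
      omega
    have e3 := Nat.mul_le_mul_right P e1
    have x1 : (zcw + a1 + (zkw + b1)) * P = (zcw + zkw) * P + (a1 + b1) * P := by ring
    have x2 : (1 + s1 + t) * P = (1 + t) * P + s1 * P := by ring
    rw [x1, x2] at e3
    have hz : zcw ≤ (zcw + zkw) * P := by
      have hP1 : 1 ≤ P := Nat.one_le_two_pow
      calc zcw ≤ (zcw + zkw) * 1 := by omega
        _ ≤ (zcw + zkw) * P := Nat.mul_le_mul_left _ hP1
    have hdle : d ≤ (1 + t) * P := by
      have hdval : d = zcw + a1 := by rw [hcCpart] at hcCw; omega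
      -- hsum : a1 + s1 * P ≤ (a1 + b1) * P
      -- e3 : (zcw+zkw)*P + (a1+b1)*P ≤ (1+t)*P + s1*P
      -- hz : zcw ≤ (zcw+zkw)*P
      have := hsum
      linarith
    have hfin2 : (1 + t) * P ≤ 2 ^ h := by
      have h1t : 1 + t ≤ 2 ^ t := by
        have := Nat.lt_two_pow_self (n := t)
        omega
      calc (1 + t) * P ≤ 2 ^ t * P := Nat.mul_le_mul_right _ h1t
        _ = 2 ^ (t + (h - t)) := by rw [pow_add]
        _ = 2 ^ h := by congr 1; omega
    omega
  · -- no vertex other than the root contains the whole circuit: sum at the root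
    have hcCroot : BD5.cnt parent f C root = d := by
      rw [BD5.cnt, ← hd]
      congr 1
      ext e
      simp only [Set.mem_setOf_eq, and_iff_left_iff_imp]
      intro _
      exact hT.2 (f e)
    have hcKroot : BD5.cnt parent f K root = K.ncard := by
      rw [BD5.cnt]
      congr 1
      ext e
      simp only [Set.mem_setOf_eq, and_iff_left_iff_imp]
      intro _
      exact hT.2 (f e)
    have hzCroot : BD5.zc f C root = 0 := hzC0 root hfC
    have hzKroot : BD5.zc f K root = 0 := by
      rw [BD5.zc]
      have : {e ∈ K | f e = root} = ∅ := by
        ext e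
        simp only [Set.mem_setOf_eq, Set.mem_empty_iff_false, iff_false, not_and]
        exact hfK e
      rw [this, Set.ncard_empty]
    have hcCpart : BD5.cnt parent f C root
        = BD5.zc f C root + ∑ j ∈ BD3.kidsF parent root, BD5.cnt parent f C j :=
      BD3.count_partition hT f C hCfin root
    have hcKpart : BD5.cnt parent f K root
        = BD5.zc f K root + ∑ j ∈ BD3.kidsF parent root, BD5.cnt parent f K j :=
      BD3.count_partition hT f K hKfin root
    have hWpart : {v : V | v ≠ root}.ncard
        = ∑ j ∈ BD3.kidsF parent root, BD5.ddn root parent j :=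
      BD3.vert_partition_root hT
    have hkid : ∀ j ∈ BD3.kidsF parent root,
        BD5.cnt parent f C j + BD5.ddn root parent j * 2 ^ h
          ≤ (BD5.cnt parent f C j + BD5.cnt parent f K j) * 2 ^ h := by
      intro j hj
      obtain ⟨hpj, hjw⟩ := BD3.mem_kidsF.1 hj
      have hjr : j ≠ root := hjw
      have hvj : vdepth root parent j = 1 := by
        rw [BD.vdepth_kid hT hpj hjw, BD.vdepth_root]
      have hjh : vdepth root parent j ≤ h := hh ▸ BD.vdepth_le_treeDepth j
      have h1h : 1 ≤ h := by omega
      have hlt : BD5.cnt parent f C j + 1 ≤ d := by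
        have hle : BD5.cnt parent f C j ≤ d := by
          rw [BD5.cnt, ← hd]
          exact Set.ncard_le_ncard (Set.sep_subset _ _) hCfin
        rcases Nat.lt_or_ge (BD5.cnt parent f C j) d with hlt' | hge
        · omega
        · exfalso
          exact hΩ ⟨j, hjr, le_antisymm hle hge⟩
      have := BD5.kid_bound hT hcond hCE hKE hdisjCK hd hd2 hWc hIndepExt ⟨e₀, he₀⟩
        j hjr hlt hjh
      rw [hvj] at this
      have hexp : h - 1 + 1 = h := by omega
      rwa [hexp] at this
    have hsum : (∑ j ∈ BD3.kidsF parent root, BD5.cnt parent f C j)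
        + (∑ j ∈ BD3.kidsF parent root, BD5.ddn root parent j) * 2 ^ h
        ≤ ((∑ j ∈ BD3.kidsF parent root, BD5.cnt parent f C j)
           + (∑ j ∈ BD3.kidsF parent root, BD5.cnt parent f K j)) * 2 ^ h := by
      have h1 := Finset.sum_le_sum hkid
      rw [Finset.sum_add_distrib, ← Finset.sum_mul, ← Finset.sum_mul,
        Finset.sum_add_distrib] at h1
      exact h1
    have ha1 : ∑ j ∈ BD3.kidsF parent root, BD5.cnt parent f C j = d := by
      rw [hcCroot, hzCroot] at hcCpart
      omega
    have hb1 : ∑ j ∈ BD3.kidsF parent root, BD5.cnt parent f K j = K.ncard := by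
      rw [hcKroot, hzKroot] at hcKpart
      omega
    rw [ha1, hb1, ← hWpart] at hsum
    -- hsum : d + W.ncard * 2^h ≤ (d + K.ncard) * 2^h, and W.ncard + 1 = d + K.ncard
    have hfinal : (d + K.ncard) * 2 ^ h = {v : V | v ≠ root}.ncard * 2 ^ h + 2 ^ h := by
      rw [← hWc]; ring
    rw [hfinal] at hsum
    omega
end

section
/- Let G be a finite simple graph whose tree-depth is at most t. Then the cycle matroid M(G) of G has a depth-decomposition of depth at most t; that is, the branch-depth of M(G) is at most the tree-depth of G. -/
/-- `(root, parent)` is a tree-depth decomposition of the graph `G`: a rooted tree on the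
vertex set of `G` such that every edge of `G` joins two vertices one of which is an
ancestor of the other. -/
def IsTreeDepthDecompOf {W : Type} (G : SimpleGraph W) (root : W) (parent : W → W) :
    Prop :=
  IsRootedTree root parent ∧
  ∀ u v : W, G.Adj u v → Anc parent u v ∨ Anc parent v u

/-- The tree-depth of a graph: the smallest depth of a rooted tree on its vertex set in
which the two endpoints of every edge are ancestor-related. -/
noncomputable def graphTreeDepth {W : Type} (G : SimpleGraph W) : ℕ :=
  sInf {t : ℕ | ∃ (root : W) (parent : W → W),
    IsTreeDepthDecompOf G root parent ∧ treeDepth root parent = t}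

/-- `M` is the cycle matroid of the graph `G`: its ground set is the edge set of `G` and
its independent sets are exactly the acyclic sets of edges of `G`. -/
def IsCycleMatroidOf {W : Type} (M : Matroid (Sym2 W)) (G : SimpleGraph W) : Prop :=
  M.E = G.edgeSet ∧
  ∀ I : Set (Sym2 W), M.Indep I ↔ I ⊆ G.edgeSet ∧ (SimpleGraph.fromEdgeSet I).IsAcyclic

namespace TD

variable {V : Type} {root : V} {parent : V → V}

lemma anc_refl (p : V → V) (v : V) : Anc p v v := ⟨0, rfl⟩

lemma anc_trans {p : V → V} {u v w : V} (h1 : Anc p u v) (h2 : Anc p w u) : Anc p w v := by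
  obtain ⟨n, hn⟩ := h1; obtain ⟨m, hm⟩ := h2
  exact ⟨m + n, by rw [Function.iterate_add_apply, hn, hm]⟩

lemma anc_comparable {p : V → V} {a b c : V} (h1 : Anc p a c) (h2 : Anc p b c) :
    Anc p a b ∨ Anc p b a := by
  obtain ⟨n, hn⟩ := h1; obtain ⟨m, hm⟩ := h2
  rcases le_total n m with h | h
  · exact Or.inr ⟨m - n, by rw [← hn, ← Function.iterate_add_apply, Nat.sub_add_cancel h, hm]⟩
  · exact Or.inl ⟨n - m, by rw [← hm, ← Function.iterate_add_apply, Nat.sub_add_cancel h, hn]⟩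

lemma vdepth_le {v : V} {n : ℕ} (h : parent^[n] v = root) : vdepth root parent v ≤ n :=
  Nat.sInf_le h

lemma vdepth_spec (hrt : IsRootedTree root parent) (v : V) :
    parent^[vdepth root parent v] v = root :=
  Nat.sInf_mem (hrt.2 v)

lemma vdepth_root : vdepth root parent root = 0 :=
  Nat.le_zero.mp (vdepth_le (by simp))

lemma vdepth_eq_zero (hrt : IsRootedTree root parent) {v : V}
    (h : vdepth root parent v = 0) : v = root := by
  have := vdepth_spec hrt v; rwa [h] at this

lemma vdepth_lt (hrt : IsRootedTree root parent) {u v : V} (h : Anc parent u v)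
    (hne : u ≠ v) : vdepth root parent u < vdepth root parent v := by
  obtain ⟨n, hn⟩ := h
  have hn0 : n ≠ 0 := by rintro rfl; exact hne hn.symm
  set d := vdepth root parent v with hd
  have hdv : parent^[d] v = root := vdepth_spec hrt v
  rcases le_or_gt d n with hle | hlt
  · have : u = root := by
      rw [← hn, ← Nat.sub_add_cancel hle, Function.iterate_add_apply, hdv,
        Function.iterate_fixed hrt.1]
    subst this
    rw [vdepth_root]
    have : d ≠ 0 := fun h0 => hne (vdepth_eq_zero hrt h0).symm
    omega
  · have : parent^[d - n] u = root := by
      rw [← hn, ← Function.iterate_add_apply, Nat.sub_add_cancel hlt.le, hdv]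
    have := vdepth_le this
    omega

lemma anc_antisymm (hrt : IsRootedTree root parent) {u v : V} (h1 : Anc parent u v)
    (h2 : Anc parent v u) : u = v := by
  by_contra hne
  have := vdepth_lt hrt h1 hne
  have := vdepth_lt hrt h2 (Ne.symm hne)
  omega

lemma vdepth_le_treeDepth [Finite V] (v : V) :
    vdepth root parent v ≤ treeDepth root parent :=
  le_csSup (Set.Finite.bddAbove (Set.finite_range _)) ⟨v, rfl⟩

lemma vdepth_le_succ (hrt : IsRootedTree root parent) (v : V) :
    vdepth root parent v ≤ vdepth root parent (parent v) + 1 := by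
  apply vdepth_le
  rw [Function.iterate_succ_apply]
  exact vdepth_spec hrt _



open SimpleGraph

variable {W : Type} [Fintype W] {r0 : W} {p : W → W} {G : SimpleGraph W}

/-- Vertices having a strict ancestor in the same component. -/
def Vset (G : SimpleGraph W) (p : W → W) : Set W :=
  {v | ∃ u, Anc p u v ∧ u ≠ v ∧ G.Reachable u v}

noncomputable def tauP (r0 : W) (p : W → W) (s : Set W) : W :=
  @dite _ (∃ m ∈ s, ∀ u ∈ s, vdepth r0 p m ≤ vdepth r0 p u) (Classical.dec _)
    (fun h => h.choose) (fun _ => r0)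

noncomputable def tau (r0 : W) (p : W → W) (H : SimpleGraph W) (v : W) : W :=
  tauP r0 p {u | H.Reachable u v}

lemma tau_spec (r0 : W) (p : W → W) (H : SimpleGraph W) (v : W) :
    H.Reachable (tau r0 p H v) v ∧
      ∀ u, H.Reachable u v → vdepth r0 p (tau r0 p H v) ≤ vdepth r0 p u := by
  have h : ∃ m ∈ {u | H.Reachable u v}, ∀ u ∈ {u | H.Reachable u v},
      vdepth r0 p m ≤ vdepth r0 p u :=
    Set.exists_min_image _ _ (Set.toFinite _) ⟨v, Reachable.refl v⟩
  rw [tau, tauP, dif_pos h]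
  exact ⟨h.choose_spec.1, h.choose_spec.2⟩

lemma tau_adj {H : SimpleGraph W} {x y : W} (h : H.Adj x y) :
    tau r0 p H x = tau r0 p H y := by
  unfold tau
  congr 1
  ext u
  exact ⟨fun hu => hu.trans h.reachable, fun hu => hu.trans h.symm.reachable⟩

lemma tau_anc (hrt : IsRootedTree r0 p) {H : SimpleGraph W}
    (hcomp : ∀ x y, H.Adj x y → Anc p x y ∨ Anc p y x) (v : W) :
    ∀ u, H.Reachable u v → Anc p (tau r0 p H v) u := by
  obtain ⟨hτr, hτm⟩ := tau_spec r0 p H v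
  set τ := tau r0 p H v with hτdef
  have aux : ∀ {x y : W} (w : H.Walk x y), Anc p τ x → H.Reachable y v → Anc p τ y := by
    intro x y w
    induction w with
    | nil => exact fun hx _ => hx
    | @cons a b c h q ih =>
      intro hx hy
      have hb : H.Reachable b v := q.reachable.trans hy
      have hab : Anc p τ b := by
        rcases hcomp _ _ h with hc | hc
        · exact anc_trans hc hx
        · rcases anc_comparable hx hc with h1 | h1
          · exact h1
          · by_cases hbe : b = τ
            · subst hbe; exact anc_refl p _
            · have := vdepth_lt hrt h1 hbe
              have := hτm b hb
              omega
      exact ih hab hy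
  intro u hu
  obtain ⟨w⟩ := hτr.trans hu.symm
  exact aux w (anc_refl p τ) hu


lemma isPath_concat {H : SimpleGraph W} {u v w : W} {q : H.Walk u v} (h : H.Adj v w)
    (hq : q.IsPath) (hw : w ∉ q.support) : (q.concat h).IsPath := by
  rw [← SimpleGraph.Walk.isPath_reverse_iff, SimpleGraph.Walk.reverse_concat]
  exact hq.reverse.cons (by simpa [SimpleGraph.Walk.support_reverse] using hw)

lemma dist_ne {H : SimpleGraph W} (hac : H.IsAcyclic) {x y : W} (h : H.Adj x y) {τ : W}
    (hτx : H.Reachable τ x) : H.dist τ x ≠ H.dist τ y := by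
  intro heq
  obtain ⟨q, hq, hql⟩ := hτx.exists_path_of_dist
  have hτy : H.Reachable τ y := hτx.trans h.reachable
  obtain ⟨r, hr, hrl⟩ := hτy.exists_path_of_dist
  by_cases hx : x ∈ r.support
  · obtain ⟨r1, r2, hsplit⟩ := SimpleGraph.Walk.mem_support_iff_exists_append.mp hx
    have h1 : H.dist τ x ≤ r1.length := SimpleGraph.dist_le r1
    have h2 : r1.length + r2.length = r.length := by
      rw [hsplit, SimpleGraph.Walk.length_append]
    have h3 : r2.length ≠ 0 := fun h0 => h.ne (SimpleGraph.Walk.eq_of_length_eq_zero h0)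
    omega
  · have hc : (r.concat h.symm).IsPath := isPath_concat _ hr hx
    have huniq := (SimpleGraph.isAcyclic_iff_path_unique.mp hac)
      ⟨q, hq⟩ ⟨r.concat h.symm, hc⟩
    have : q.length = (r.concat h.symm).length :=
      congrArg (fun P : H.Path τ x => P.1.length) huniq
    rw [SimpleGraph.Walk.length_concat] at this
    omega

lemma core (hrt : IsRootedTree r0 p)
    (hcomp : ∀ u v : W, G.Adj u v → Anc p u v ∨ Anc p v u)
    (I : Set (Sym2 W)) (hIG : I ⊆ G.edgeSet)
    (hac : (SimpleGraph.fromEdgeSet I).IsAcyclic) :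
    ∃ φ : Sym2 W → W, Set.InjOn φ I ∧ ∀ e ∈ I, φ e ∈ Vset G p ∧
      ∀ u v : W, e = s(u, v) → Anc p u v → Anc p (φ e) v ∧ G.Reachable (φ e) v := by
  classical
  set H := SimpleGraph.fromEdgeSet I with hHdef
  have HleG : H ≤ G := by
    intro a b hab
    rw [hHdef, SimpleGraph.fromEdgeSet_adj] at hab
    exact (SimpleGraph.mem_edgeSet _).mp (hIG hab.1)
  have hcompH : ∀ x y : W, H.Adj x y → Anc p x y ∨ Anc p y x :=
    fun x y h => hcomp x y (HleG h)
  have hP : ∀ e ∈ I, ∃ v x, e = s(x, v) ∧ H.Adj x v ∧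
      H.dist (tau r0 p H v) x < H.dist (tau r0 p H v) v := by
    intro e he
    induction e using Sym2.ind with
    | _ a b =>
      have hGadj : G.Adj a b := (SimpleGraph.mem_edgeSet _).mp (hIG he)
      have hadj : H.Adj a b := by
        rw [hHdef, SimpleGraph.fromEdgeSet_adj]; exact ⟨he, hGadj.ne⟩
      have hτ : tau r0 p H a = tau r0 p H b := tau_adj hadj
      have hτa : H.Reachable (tau r0 p H a) a := (tau_spec r0 p H a).1
      have hne := dist_ne hac hadj hτa
      rcases lt_or_gt_of_ne hne with hlt | hlt
      · refine ⟨b, a, rfl, hadj, ?_⟩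
        rw [← hτ]; exact hlt
      · refine ⟨a, b, Sym2.eq_swap, hadj.symm, ?_⟩
        exact hlt
  set φ : Sym2 W → W := fun e =>
    @dite _ (∃ v x, e = s(x, v) ∧ H.Adj x v ∧
      H.dist (tau r0 p H v) x < H.dist (tau r0 p H v) v) (Classical.dec _)
      (fun h => h.choose) (fun _ => r0) with hφdef
  have hφspec : ∀ e ∈ I, ∃ x, e = s(x, φ e) ∧ H.Adj x (φ e) ∧
      H.dist (tau r0 p H (φ e)) x < H.dist (tau r0 p H (φ e)) (φ e) := by
    intro e he
    have h := hP e he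
    have hev : φ e = h.choose := by rw [hφdef]; simp only []; rw [dif_pos h]
    rw [hev]
    exact h.choose_spec
  refine ⟨φ, ?_, ?_⟩
  · -- injectivity
    intro e1 h1 e2 h2 heq
    obtain ⟨x1, he1, hadj1, hlt1⟩ := hφspec e1 h1
    obtain ⟨x2, he2, hadj2, hlt2⟩ := hφspec e2 h2
    rw [← heq] at he2 hadj2 hlt2
    by_cases hx : x1 = x2
    · rw [he1, he2, hx]
    · exfalso
      set y := φ e1 with hy
      set τ := tau r0 p H y with hτ
      have hτy : H.Reachable τ y := (tau_spec r0 p H y).1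
      have hr1 : H.Reachable τ x1 := hτy.trans hadj1.symm.reachable
      have hr2 : H.Reachable τ x2 := hτy.trans hadj2.symm.reachable
      obtain ⟨q1, hq1, hl1⟩ := hr1.exists_path_of_dist
      obtain ⟨q2, hq2, hl2⟩ := hr2.exists_path_of_dist
      have hy1 : y ∉ q1.support := by
        intro hmem
        obtain ⟨a, b, hab⟩ := SimpleGraph.Walk.mem_support_iff_exists_append.mp hmem
        have hd : H.dist τ y ≤ a.length := SimpleGraph.dist_le a
        have hl : a.length + b.length = q1.length := by
          rw [hab, SimpleGraph.Walk.length_append]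
        omega
      have hy2 : y ∉ q2.support := by
        intro hmem
        obtain ⟨a, b, hab⟩ := SimpleGraph.Walk.mem_support_iff_exists_append.mp hmem
        have hd : H.dist τ y ≤ a.length := SimpleGraph.dist_le a
        have hl : a.length + b.length = q2.length := by
          rw [hab, SimpleGraph.Walk.length_append]
        omega
      have hc1 : (q1.concat hadj1).IsPath := isPath_concat _ hq1 hy1
      have hc2 : (q2.concat hadj2).IsPath := isPath_concat _ hq2 hy2
      have huniq := (SimpleGraph.isAcyclic_iff_path_unique.mp hac)
        ⟨q1.concat hadj1, hc1⟩ ⟨q2.concat hadj2, hc2⟩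
      have hval : q1.concat hadj1 = q2.concat hadj2 :=
        congrArg Subtype.val huniq
      have hx12 : x1 = x2 := by
        have h1' := congrArg (fun w : H.Walk τ y => w.reverse.getVert 1) hval
        simpa [SimpleGraph.Walk.reverse_concat, SimpleGraph.Walk.getVert_cons_succ,
          SimpleGraph.Walk.getVert_zero] using h1'
      exact hx hx12
  · intro e he
    obtain ⟨x, hex, hadj, hlt⟩ := hφspec e he
    have hτv : H.Reachable (tau r0 p H (φ e)) (φ e) := (tau_spec r0 p H (φ e)).1
    have hτne : tau r0 p H (φ e) ≠ φ e := by
      intro h0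
      rw [h0] at hlt
      simp [SimpleGraph.dist_self] at hlt
    have hanc : Anc p (tau r0 p H (φ e)) (φ e) :=
      tau_anc hrt hcompH (φ e) (φ e) (SimpleGraph.Reachable.refl (φ e))
    constructor
    · exact ⟨tau r0 p H (φ e), hanc, hτne, SimpleGraph.Reachable.mono HleG hτv⟩
    · intro u v' huv hancu
      have hswap : s(x, φ e) = s(u, v') := hex.symm.trans huv
      rcases Sym2.eq_iff.mp hswap with ⟨hxu, hfv⟩ | ⟨hxv, hfu⟩
      · rw [hfv]
        exact ⟨anc_refl p v', SimpleGraph.Reachable.refl v'⟩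
      · rw [hfu]
        have hGadj : G.Adj u v' := (SimpleGraph.mem_edgeSet _).mp (hIG (huv ▸ he))
        exact ⟨hancu, hGadj.reachable⟩

lemma span (B : Set (Sym2 W)) (hBG : B ⊆ G.edgeSet)
    (hBac : (SimpleGraph.fromEdgeSet B).IsAcyclic)
    (hmax : ∀ e ∈ G.edgeSet, e ∉ B → ¬ (SimpleGraph.fromEdgeSet (insert e B)).IsAcyclic) :
    ∀ u v : W, G.Reachable u v → (SimpleGraph.fromEdgeSet B).Reachable u v := by
  have edge : ∀ a b : W, G.Adj a b → (SimpleGraph.fromEdgeSet B).Reachable a b := by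
    intro a b hab
    by_cases hB : s(a, b) ∈ B
    · exact ((SimpleGraph.fromEdgeSet_adj _).2 ⟨hB, hab.ne⟩).reachable
    · have hnac := hmax _ ((SimpleGraph.mem_edgeSet _).2 hab) hB
      simp only [SimpleGraph.IsAcyclic] at hnac
      push_neg at hnac
      obtain ⟨x, c, hc⟩ := hnac
      by_cases hin : s(a, b) ∈ c.edges
      · have h2 := SimpleGraph.adj_and_reachable_delete_edges_iff_exists_cycle.mpr ⟨x, c, hc, hin⟩
        refine SimpleGraph.Reachable.mono ?_ h2.2
        intro z y hzy
        rw [SimpleGraph.deleteEdges, SimpleGraph.sdiff_adj] at hzy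
        obtain ⟨hz1, hz2⟩ := hzy
        rw [SimpleGraph.fromEdgeSet_adj] at hz1 ⊢
        refine ⟨?_, hz1.2⟩
        rcases Set.mem_insert_iff.mp hz1.1 with h | h
        · exfalso
          apply hz2
          rw [SimpleGraph.fromEdgeSet_adj]
          exact ⟨by rw [h]; exact Set.mem_singleton _, hz1.2⟩
        · exact h
      · exfalso
        have hsub : ∀ f ∈ c.edges, f ∈ (SimpleGraph.fromEdgeSet B).edgeSet := by
          intro f hf
          have hf2 := c.edges_subset_edgeSet hf
          rw [SimpleGraph.edgeSet_fromEdgeSet] at hf2 ⊢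
          obtain ⟨hf3, hf4⟩ := hf2
          refine ⟨?_, hf4⟩
          rcases Set.mem_insert_iff.mp hf3 with h | h
          · exact absurd (h ▸ hf) hin
          · exact h
        exact hBac (c.transfer _ hsub) (hc.transfer hsub)
  intro u v huv
  obtain ⟨w⟩ := huv
  induction w with
  | nil => exact SimpleGraph.Reachable.refl _
  | cons h q ih => exact (edge _ _ h).trans ih

lemma iota (hrt : IsRootedTree r0 p)
    (B : Set (Sym2 W)) (hBG : B ⊆ G.edgeSet)
    (hBac : (SimpleGraph.fromEdgeSet B).IsAcyclic)
    (hmax : ∀ e ∈ G.edgeSet, e ∉ B → ¬ (SimpleGraph.fromEdgeSet (insert e B)).IsAcyclic) :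
    ∃ ι : W → Sym2 W, Set.InjOn ι (Vset G p) ∧ ∀ v ∈ Vset G p, ι v ∈ B := by
  classical
  set HB := SimpleGraph.fromEdgeSet B with hHBdef
  have hspan := span B hBG hBac hmax
  have hSv : ∀ v ∈ Vset G p, ∃ x, HB.Adj v x ∧
      HB.dist (tau r0 p HB v) x + 1 = HB.dist (tau r0 p HB v) v := by
    intro v hv
    obtain ⟨u, hanc, hne, hre⟩ := hv
    have hreB : HB.Reachable u v := hspan u v hre
    obtain ⟨hτr, hτm⟩ := tau_spec r0 p HB v
    set τ := tau r0 p HB v with hτdef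
    have hτne : τ ≠ v := by
      intro h0
      have h1 := hτm u hreB
      have h2 := vdepth_lt hrt hanc hne
      rw [h0] at h1
      omega
    have hpos : 0 < HB.dist τ v := hτr.pos_dist_of_ne hτne
    obtain ⟨r, hrp, hrl⟩ := hτr.symm.exists_path_of_dist
    have hrnil : ¬ r.Nil := by
      rw [SimpleGraph.Walk.not_nil_iff_lt_length, hrl, SimpleGraph.dist_comm]
      exact hpos
    obtain ⟨x, hadj, q, hq⟩ := SimpleGraph.Walk.not_nil_iff.mp hrnil
    refine ⟨x, hadj, ?_⟩
    have h1 : HB.dist τ x ≤ q.length := by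
      have := SimpleGraph.dist_le q.reverse
      rwa [SimpleGraph.Walk.length_reverse] at this
    have h2 : q.length + 1 = r.length := by
      rw [hq]; simp [SimpleGraph.Walk.length_cons]
    have h3 : HB.dist τ v ≤ HB.dist τ x + 1 := by
      obtain ⟨s', hsp, hsl⟩ := (hτr.trans hadj.reachable).exists_path_of_dist
      have hs := SimpleGraph.dist_le (s'.concat hadj.symm)
      rwa [SimpleGraph.Walk.length_concat, hsl] at hs
    have h4 : r.length = HB.dist τ v := by rw [hrl, SimpleGraph.dist_comm]
    omega
  set ι : W → Sym2 W := fun v =>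
    @dite _ (∃ x, HB.Adj v x ∧ HB.dist (tau r0 p HB v) x + 1 = HB.dist (tau r0 p HB v) v)
      (Classical.dec _) (fun h => s(v, h.choose)) (fun _ => s(v, v)) with hιdef
  have hspec : ∀ v ∈ Vset G p, ∃ x, ι v = s(v, x) ∧ HB.Adj v x ∧
      HB.dist (tau r0 p HB v) x + 1 = HB.dist (tau r0 p HB v) v := by
    intro v hv
    have h := hSv v hv
    refine ⟨h.choose, ?_, h.choose_spec⟩
    rw [hιdef]; simp only []; rw [dif_pos h]
  refine ⟨ι, ?_, ?_⟩
  · intro v hv w hw heq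
    obtain ⟨xv, hev, hadjv, hdv⟩ := hspec v hv
    obtain ⟨xw, hew, hadjw, hdw⟩ := hspec w hw
    have h0 : s(v, xv) = s(w, xw) := by rw [← hev, ← hew, heq]
    rcases Sym2.eq_iff.mp h0 with ⟨h1, _⟩ | ⟨h1, h2⟩
    · exact h1
    · exfalso
      have hadj' : HB.Adj v w := h2 ▸ hadjv
      have hτ : tau r0 p HB v = tau r0 p HB w := tau_adj hadj'
      rw [h2, hτ] at hdv
      rw [← h1] at hdw
      omega
  · intro v hv
    obtain ⟨x, hev, hadj, _⟩ := hspec v hv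
    rw [hev]
    rw [hHBdef, SimpleGraph.fromEdgeSet_adj] at hadj
    exact hadj.1

/-- The candidate set for the parent of `x` in the decomposition tree. -/
def Cand (G : SimpleGraph W) (p : W → W) (x : W) : Set W :=
  {u | u ∈ Vset G p ∧ Anc p u x ∧ u ≠ x ∧ G.Reachable u x}

noncomputable def parT (r0 : W) (p : W → W) (G : SimpleGraph W) :
    Option ↥(Vset G p) → Option ↥(Vset G p) := fun y =>
  match y with
  | none => none
  | some x =>
    @dite _ (∃ m ∈ Cand G p x.1, ∀ u ∈ Cand G p x.1, vdepth r0 p u ≤ vdepth r0 p m)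
      (Classical.dec _)
      (fun h => some ⟨h.choose, h.choose_spec.1.1⟩) (fun _ => none)

lemma parT_none : parT r0 p G none = none := rfl

lemma parT_cases (x : ↥(Vset G p)) :
    parT r0 p G (some x) = none ∨ ∃ w : ↥(Vset G p), parT r0 p G (some x) = some w ∧
      w.1 ∈ Cand G p x.1 ∧ ∀ u ∈ Cand G p x.1, vdepth r0 p u ≤ vdepth r0 p w.1 := by
  by_cases h : ∃ m ∈ Cand G p x.1, ∀ u ∈ Cand G p x.1, vdepth r0 p u ≤ vdepth r0 p m
  · right
    refine ⟨⟨h.choose, h.choose_spec.1.1⟩, ?_, h.choose_spec.1, h.choose_spec.2⟩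
    show @dite _ _ (Classical.dec _) _ _ = _
    rw [dif_pos h]
  · left
    show @dite _ _ (Classical.dec _) _ _ = _
    rw [dif_neg h]

lemma parT_anc {x w : ↥(Vset G p)} (h : parT r0 p G (some x) = some w) :
    Anc p w.1 x.1 ∧ w.1 ≠ x.1 := by
  rcases parT_cases (r0 := r0) x with h0 | ⟨w', hw', hc, _⟩
  · rw [h0] at h; exact absurd h (by simp)
  · rw [hw'] at h
    obtain rfl : w' = w := by injection h
    exact ⟨hc.2.1, hc.2.2.1⟩

lemma parT_some (hw0 : (Cand G p x0).Nonempty) (x : ↥(Vset G p)) (hx : x.1 = x0) :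
    ∃ w : ↥(Vset G p), parT r0 p G (some x) = some w ∧
      w.1 ∈ Cand G p x.1 ∧ ∀ u ∈ Cand G p x.1, vdepth r0 p u ≤ vdepth r0 p w.1 := by
  subst hx
  rcases parT_cases (r0 := r0) x with h0 | h1
  · exfalso
    obtain ⟨m, hm⟩ := Set.exists_max_image (Cand G p x.1) (vdepth r0 p) (Set.toFinite _) hw0
    have : ∃ m ∈ Cand G p x.1, ∀ u ∈ Cand G p x.1, vdepth r0 p u ≤ vdepth r0 p m :=
      ⟨m, hm.1, hm.2⟩
    have h1 : parT r0 p G (some x) = some ⟨this.choose, this.choose_spec.1.1⟩ := by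
      show @dite _ _ (Classical.dec _) _ _ = _
      rw [dif_pos this]
    rw [h0] at h1
    exact absurd h1 (by simp)
  · exact h1

lemma vdepth_pos_of_mem (hrt : IsRootedTree r0 p) {x : W} (hx : x ∈ Vset G p) :
    1 ≤ vdepth r0 p x := by
  obtain ⟨u, hanc, hne, _⟩ := hx
  have := vdepth_lt hrt hanc hne
  omega

lemma rootedT (hrt : IsRootedTree r0 p) :
    IsRootedTree (none : Option ↥(Vset G p)) (parT r0 p G) := by
  refine ⟨rfl, ?_⟩
  have key : ∀ n : ℕ, ∀ x : ↥(Vset G p), vdepth r0 p x.1 ≤ n →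
      ∃ m, (parT r0 p G)^[m] (some x) = none := by
    intro n
    induction n with
    | zero =>
      intro x hx
      rcases parT_cases (r0 := r0) x with h0 | ⟨w, hw, hc, _⟩
      · exact ⟨1, by simpa using h0⟩
      · have := vdepth_lt hrt hc.2.1 hc.2.2.1
        omega
    | succ n ih =>
      intro x hx
      rcases parT_cases (r0 := r0) x with h0 | ⟨w, hw, hc, _⟩
      · exact ⟨1, by simpa using h0⟩
      · have hlt := vdepth_lt hrt hc.2.1 hc.2.2.1
        obtain ⟨m, hm⟩ := ih w (by omega)
        exact ⟨m + 1, by rw [Function.iterate_succ_apply, hw, hm]⟩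
  rintro (_ | x)
  · exact ⟨0, rfl⟩
  · exact key (vdepth r0 p x.1) x le_rfl

lemma vdepthT_le (hrt : IsRootedTree r0 p) (x : ↥(Vset G p)) :
    vdepth (none : Option ↥(Vset G p)) (parT r0 p G) (some x) ≤ vdepth r0 p x.1 := by
  have hrtT := rootedT (G := G) hrt
  have key : ∀ n : ℕ, ∀ x : ↥(Vset G p), vdepth r0 p x.1 ≤ n →
      vdepth (none : Option ↥(Vset G p)) (parT r0 p G) (some x) ≤ vdepth r0 p x.1 := by
    intro n
    induction n with
    | zero =>
      intro x hx
      have := vdepth_pos_of_mem hrt x.2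
      omega
    | succ n ih =>
      intro x hx
      have hstep := vdepth_le_succ (root := (none : Option ↥(Vset G p))) hrtT (some x)
      rcases parT_cases (r0 := r0) x with h0 | ⟨w, hw, hc, _⟩
      · rw [h0] at hstep
        rw [vdepth_root] at hstep
        have := vdepth_pos_of_mem hrt x.2
        omega
      · rw [hw] at hstep
        have hlt := vdepth_lt hrt hc.2.1 hc.2.2.1
        have := ih w (by omega)
        omega
  exact key (vdepth r0 p x.1) x le_rfl

lemma ancT (hrt : IsRootedTree r0 p) (x w : ↥(Vset G p)) (hanc : Anc p w.1 x.1)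
    (hre : G.Reachable w.1 x.1) : Anc (parT r0 p G) (some w) (some x) := by
  have key : ∀ n : ℕ, ∀ x w : ↥(Vset G p), vdepth r0 p x.1 ≤ n → Anc p w.1 x.1 →
      G.Reachable w.1 x.1 → Anc (parT r0 p G) (some w) (some x) := by
    intro n
    induction n with
    | zero =>
      intro x w hx _ _
      have := vdepth_pos_of_mem hrt x.2
      omega
    | succ n ih =>
      intro x w hx hanc hre
      by_cases hwx : w.1 = x.1
      · have : w = x := Subtype.ext hwx
        subst this
        exact anc_refl _ _
      · have hcand : w.1 ∈ Cand G p x.1 := ⟨w.2, hanc, hwx, hre⟩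
        obtain ⟨m, hm, hmc, hmax⟩ := parT_some ⟨w.1, hcand⟩ x rfl
        have hstep : Anc (parT r0 p G) (some m) (some x) := ⟨1, by simpa using hm⟩
        by_cases hwm : w.1 = m.1
        · have : w = m := Subtype.ext hwm
          subst this
          exact hstep
        · have hwanc : Anc p w.1 m.1 := by
            rcases anc_comparable hanc hmc.2.1 with h1 | h1
            · exact h1
            · exfalso
              have := vdepth_lt hrt h1 (fun h => hwm h.symm)
              have := hmax w.1 hcand
              omega
          have hwre : G.Reachable w.1 m.1 := hre.trans hmc.2.2.2.symm
          have hlt := vdepth_lt hrt hmc.2.1 hmc.2.2.1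
          have := ih m w (by omega) hwanc hwre
          exact anc_trans hstep this
  exact key (vdepth r0 p x.1) x w le_rfl hanc hre

/-- the map sending an edge to its deeper endpoint, as a vertex of the tree. -/
noncomputable def fT (r0 : W) (p : W → W) (G : SimpleGraph W) :
    Sym2 W → Option ↥(Vset G p) := fun e =>
  @dite _ (∃ v, v ∈ Vset G p ∧ ∃ u, e = s(u, v) ∧ Anc p u v ∧ u ≠ v) (Classical.dec _)
    (fun h => some ⟨h.choose, h.choose_spec.1⟩) (fun _ => none)

lemma fT_eq (hrt : IsRootedTree r0 p) {u v : W} (hadj : G.Adj u v) (hanc : Anc p u v) :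
    ∃ hv : v ∈ Vset G p, fT r0 p G s(u, v) = some ⟨v, hv⟩ := by
  have hne : u ≠ v := hadj.ne
  have hv : v ∈ Vset G p := ⟨u, hanc, hne, hadj.reachable⟩
  have hex : ∃ v', v' ∈ Vset G p ∧ ∃ u', s(u, v) = s(u', v') ∧ Anc p u' v' ∧ u' ≠ v' :=
    ⟨v, hv, u, rfl, hanc, hne⟩
  refine ⟨hv, ?_⟩
  unfold fT
  rw [dif_pos hex]
  obtain ⟨hmem, u', heq, hanc', hne'⟩ := hex.choose_spec
  rcases Sym2.eq_iff.mp heq with ⟨h1, h2⟩ | ⟨h1, h2⟩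
  · congr 1
    exact Subtype.ext h2.symm
  · exfalso
    rw [← h1, ← h2] at hanc'
    exact hne (anc_antisymm hrt hanc hanc')

lemma acyclic_empty : (SimpleGraph.fromEdgeSet (∅ : Set (Sym2 W))).IsAcyclic := by
  intro v c hc
  cases c with
  | nil => simpa using hc.three_le_length
  | cons h q =>
    rw [SimpleGraph.fromEdgeSet_adj] at h
    exact h.1

lemma mrank_le_of {α : Type} (M : Matroid α) (X : Set α) (n : ℕ)
    (h : ∀ I : Set α, I ⊆ X → M.Indep I → I.ncard ≤ n) : mrank M X ≤ n := by
  have hne : {n : ℕ | ∃ I : Set α, I ⊆ X ∧ M.Indep I ∧ I.ncard = n}.Nonempty :=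
    ⟨0, ∅, Set.empty_subset X, M.empty_indep, Set.ncard_empty _⟩
  apply csSup_le hne
  rintro b ⟨I, hIX, hind, rfl⟩
  exact h I hIX hind

lemma le_mrank_of {α : Type} [Finite α] (M : Matroid α) (X : Set α) (I : Set α)
    (hIX : I ⊆ X) (hind : M.Indep I) : I.ncard ≤ mrank M X := by
  apply le_csSup
  · refine ⟨Nat.card α, ?_⟩
    rintro b ⟨J, hJ, hJi, rfl⟩
    rw [← Set.ncard_univ]
    exact Set.ncard_le_ncard (Set.subset_univ J) Set.finite_univ
  · exact ⟨I, hIX, hind, rfl⟩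

end TD

/-- If a finite simple graph `G` has tree-depth at most `t`, then its
cycle matroid has a depth-decomposition of depth at most `t`; that is, the branch-depth
of `M(G)` is at most the tree-depth of `G`. -/
theorem cycleMatroid_branchDepth_le_treeDepth {W : Type} [Fintype W]
    (G : SimpleGraph W) (t : ℕ)
    (htd : ∃ (root : W) (parent : W → W),
      IsTreeDepthDecompOf G root parent ∧ treeDepth root parent ≤ t)
    (M : Matroid (Sym2 W)) (hM : IsCycleMatroidOf M G) :
    HasDepthDecompOfDepthLE M t := by
  classical
  obtain ⟨r0, p, ⟨hrt, hcomp⟩, hdep⟩ := htd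
  obtain ⟨hME, hMI⟩ := hM
  have hfin : Finite (Sym2 W) := by
    refine Finite.of_surjective (fun z : W × W => s(z.1, z.2)) (fun e => ?_)
    induction e using Sym2.ind with | _ u v => exact ⟨(u, v), rfl⟩
  have hdb : ∀ v : W, vdepth r0 p v ≤ t := fun v => le_trans (TD.vdepth_le_treeDepth v) hdep
  have hrtT := TD.rootedT (G := G) hrt
  have hcount : Set.ncard {v : Option ↥(TD.Vset G p) | v ≠ none} = (TD.Vset G p).ncard := by
    have h1 : {v : Option ↥(TD.Vset G p) | v ≠ none} = Set.range some := by
      ext v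
      simp only [Set.mem_setOf_eq, Set.mem_range]
      exact Option.ne_none_iff_exists
    rw [h1, ← Set.image_univ, Set.ncard_image_of_injective _ (Option.some_injective _),
      Set.ncard_univ, Nat.card_coe_set_eq]
  have hub : ∀ I : Set (Sym2 W), I ⊆ G.edgeSet → (SimpleGraph.fromEdgeSet I).IsAcyclic →
      I.ncard ≤ (TD.Vset G p).ncard := by
    intro I hIG hac
    obtain ⟨φ, hinj, hprop⟩ := TD.core hrt hcomp I hIG hac
    exact Set.ncard_le_ncard_of_injOn φ (fun e he => (hprop e he).1) hinj (Set.toFinite _)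
  obtain ⟨B, hB⟩ := M.exists_isBase
  have hBi := hB.indep
  have hBG : B ⊆ G.edgeSet := hME ▸ hBi.subset_ground
  have hBac : (SimpleGraph.fromEdgeSet B).IsAcyclic := ((hMI B).1 hBi).2
  have hmax : ∀ e ∈ G.edgeSet, e ∉ B →
      ¬ (SimpleGraph.fromEdgeSet (insert e B)).IsAcyclic := by
    intro e he heB hac
    have hind : M.Indep (insert e B) := (hMI _).2 ⟨Set.insert_subset he hBG, hac⟩
    have := (Matroid.isBase_iff_maximal_indep.mp hB).2 hind (Set.subset_insert e B)
    exact heB (this (Set.mem_insert e B))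
  obtain ⟨ι, hιinj, hιmem⟩ := TD.iota hrt B hBG hBac hmax
  have hlb : (TD.Vset G p).ncard ≤ B.ncard :=
    Set.ncard_le_ncard_of_injOn ι hιmem hιinj (Set.toFinite _)
  refine ⟨Option ↥(TD.Vset G p), none, TD.parT r0 p G, TD.fT r0 p G, ⟨?_, hrtT, ?_, ?_⟩, ?_⟩
  · infer_instance
  · rw [hcount]
    apply le_antisymm
    · apply TD.mrank_le_of
      intro I hIX hind
      obtain ⟨hIG, hac⟩ := (hMI I).1 hind
      exact hub I hIG hac
    · calc (TD.Vset G p).ncard ≤ B.ncard := hlb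
        _ ≤ mrank M M.E := TD.le_mrank_of M M.E B hBi.subset_ground hBi
  · intro X hX
    apply TD.mrank_le_of
    intro I hIX hind
    obtain ⟨hIG, hac⟩ := (hMI I).1 hind
    obtain ⟨φ, hinj, hprop⟩ := TD.core hrt hcomp I hIG hac
    set g : Sym2 W → Option ↥(TD.Vset G p) := fun e =>
      if h : φ e ∈ TD.Vset G p then some ⟨φ e, h⟩ else none with hgdef
    have hg : ∀ e (he : e ∈ I), g e = some ⟨φ e, (hprop e he).1⟩ := by
      intro e he
      rw [hgdef]
      simp only []
      rw [dif_pos (hprop e he).1]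
    apply Set.ncard_le_ncard_of_injOn g ?_ ?_ (Set.toFinite _)
    · intro e he
      have hVe := (hprop e he).1
      have hori := (hprop e he).2
      have hedge : ∃ u v : W, e = s(u, v) := by
        induction e using Sym2.ind with | _ u v => exact ⟨u, v, rfl⟩
      obtain ⟨u, v, rfl⟩ := hedge
      have hGadj : G.Adj u v := (SimpleGraph.mem_edgeSet _).mp (hIG he)
      rcases hcomp u v hGadj with hanc | hanc
      · obtain ⟨hv, hfe⟩ := TD.fT_eq hrt hGadj hanc
        refine ⟨by rw [hg _ he]; simp, s(u, v), hIX he, ?_⟩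
        rw [hg _ he, hfe]
        obtain ⟨hancφ, hreφ⟩ := hori u v rfl hanc
        exact TD.ancT hrt ⟨v, hv⟩ ⟨φ _, hVe⟩ hancφ hreφ
      · obtain ⟨hv, hfe⟩ := TD.fT_eq hrt hGadj.symm hanc
        have hsw : s(u, v) = s(v, u) := Sym2.eq_swap
        refine ⟨by rw [hg _ he]; simp, s(u, v), hIX he, ?_⟩
        rw [hg _ he]
        rw [show TD.fT r0 p G s(u, v) = TD.fT r0 p G s(v, u) from by rw [← hsw], hfe]
        obtain ⟨hancφ, hreφ⟩ := hori v u hsw hanc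
        exact TD.ancT hrt ⟨u, hv⟩ ⟨φ _, hVe⟩ hancφ hreφ
    · intro e1 h1 e2 h2 heq
      rw [hg _ h1, hg _ h2] at heq
      simp only [Option.some.injEq, Subtype.mk.injEq] at heq
      exact hinj h1 h2 heq
  · have hne : (Set.range (vdepth (none : Option ↥(TD.Vset G p)) (TD.parT r0 p G))).Nonempty :=
      ⟨vdepth none (TD.parT r0 p G) none, ⟨none, rfl⟩⟩
    unfold treeDepth
    apply csSup_le hne
    rintro b ⟨y, rfl⟩
    cases y with
    | none =>
      rw [TD.vdepth_root]
      exact Nat.zero_le t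
    | some x => exact le_trans (TD.vdepthT_le hrt x) (hdb x.1)
end

section
/- Let M be a finite connected matroid and e an element of M such that the contraction M/e is disconnected. Then for every component K of M/e, there exists a circuit C of M containing e such that C ⊆ K ∪ {e}. -/
open Set in
private lemma mrank_indep_aux {α : Type} (M : Matroid α) {I : Set α} (hI : M.Indep I)
    (hIfin : I.Finite) : mrank M I = I.ncard := by
  unfold mrank
  apply le_antisymm
  · refine csSup_le ⟨0, ∅, Set.empty_subset _, M.empty_indep, by simp⟩ ?_
    rintro n ⟨J, hJI, -, rfl⟩
    exact Set.ncard_le_ncard hJI hIfin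
  · exact le_csSup ⟨I.ncard, by rintro n ⟨J, hJI, -, rfl⟩; exact Set.ncard_le_ncard hJI hIfin⟩
      ⟨I, Set.Subset.rfl, hI, rfl⟩

private lemma mrank_dep_lt_aux {α : Type} (M : Matroid α) {C : Set α} (hC : M.Dep C)
    (hfin : C.Finite) (hne : C.Nonempty) : mrank M C < C.ncard := by
  have hpos : 0 < C.ncard := (Set.ncard_pos hfin).2 hne
  have hle : mrank M C ≤ C.ncard - 1 := by
    refine csSup_le ⟨0, ∅, Set.empty_subset _, M.empty_indep, by simp⟩ ?_
    rintro n ⟨J, hJI, hJ, rfl⟩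
    have hne' : J ≠ C := fun h => hC.not_indep (h ▸ hJ)
    have := Set.ncard_lt_ncard (hJI.ssubset_of_ne hne') hfin
    omega
  omega

/-- Let `M` be a finite connected matroid and `e` an element of `M`
such that the contraction `M / e` is disconnected. Then for every component `K` of
`M / e` there is a circuit `C` of `M` with `e ∈ C` and `C ⊆ K ∪ {e}`. -/
theorem exists_circuit_in_component_of_contract_disconnected {α : Type}
    (M : Matroid α) [M.Finite] (hM : IsConnectedM M)
    (e : α) (he : e ∈ M.E) (N : Matroid α) (hN : IsContractionBy M {e} N)
    (hdis : ¬ IsConnectedM N)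
    (K : Set α) (hK : IsComponentOf N K) :
    ∃ C : Set α, IsCircuitOf M C ∧ e ∈ C ∧ C ⊆ K ∪ {e} := by
  clear hdis
  obtain ⟨hMne, hMconn⟩ := hM
  obtain ⟨x, hxN, rfl⟩ := hK
  have hEfin : M.E.Finite := M.ground_finite
  have hNE : N.E = M.E \ {e} := hN.1
  rw [hNE] at hxN
  obtain ⟨hxE, hxe⟩ := hxN
  have hxe' : x ≠ e := hxe
  rcases hMconn x hxE e he with h | ⟨C, hC, hxC, heC⟩
  · exact absurd h hxe'
  refine ⟨C, hC, heC, ?_⟩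
  have hCE : C ⊆ M.E := hC.1.subset_ground
  have hCfin : C.Finite := hEfin.subset hCE
  have hCne : C.Nonempty := ⟨e, heC⟩
  have hsub : ({e} : Set α) ⊆ C := Set.singleton_subset_iff.2 heC
  -- proper subsets of C are independent
  have hindep_proper : ∀ S : Set α, S ⊆ C → S ≠ C → M.Indep S := by
    intro S hS hSne
    by_contra h
    exact hSne (hC.2 S ((M.dep_iff).2 ⟨h, hS.trans hCE⟩) hS)
  have hCpos : 1 ≤ C.ncard := (Set.ncard_pos hCfin).2 hCne
  have hCard2 : 2 ≤ C.ncard := by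
    have : ({x, e} : Set α) ⊆ C := by
      intro z hz; rcases hz with rfl | rfl
      exacts [hxC, heC]
    calc 2 = ({x, e} : Set α).ncard := (Set.ncard_pair hxe').symm
    _ ≤ C.ncard := Set.ncard_le_ncard this hCfin
  have heIndep : M.Indep {e} := by
    apply hindep_proper _ hsub
    intro h
    rw [← h] at hxC
    exact hxe' hxC
  have hre : mrank M {e} = 1 := by
    rw [mrank_indep_aux M heIndep (Set.finite_singleton e)]
    simp
  have hDfin : (C \ {e}).Finite := hCfin.diff
  have hDcard : (C \ {e}).ncard = C.ncard - 1 := by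
    rw [Set.ncard_diff hsub]
    simp
  have hunion : ({e} : Set α) ∪ (C \ {e}) = C := Set.union_diff_cancel hsub
  have hDsubNE : C \ {e} ⊆ N.E := by
    rw [hNE]; exact Set.diff_subset_diff_left hCE
  -- C \ {e} is not independent in N
  have hnotind : ¬ N.Indep (C \ {e}) := by
    rw [hN.2]
    rintro ⟨-, -, hr⟩
    rw [hunion, hre, hDcard] at hr
    have := mrank_dep_lt_aux M hC.1 hCfin hCne
    omega
  have hDdep : N.Dep (C \ {e}) := (N.dep_iff).2 ⟨hnotind, hDsubNE⟩
  -- C \ {e} is a circuit of N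
  have hcirc : IsCircuitOf N (C \ {e}) := by
    refine ⟨hDdep, fun D hD hDsub => ?_⟩
    by_contra hne
    apply hD.not_indep
    rw [hN.2]
    have hDC : D ⊆ C \ {e} := hDsub
    have hDfin' : D.Finite := hDfin.subset hDC
    have heD : e ∉ D := fun h => (hDC h).2 rfl
    refine ⟨hDC.trans (Set.diff_subset_diff_left hCE), hDfin', ?_⟩
    have hsubC : ({e} : Set α) ∪ D ⊆ C := by
      rw [Set.singleton_union]
      exact Set.insert_subset heC ((hDC.trans Set.diff_subset))
    have hneC : ({e} : Set α) ∪ D ≠ C := by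
      obtain ⟨y, hy1, hy2⟩ := Set.exists_of_ssubset (hDC.ssubset_of_ne hne)
      intro h
      have : y ∈ ({e} : Set α) ∪ D := h ▸ hy1.1
      rcases this with h' | h'
      · exact hy1.2 h'
      · exact hy2 h'
    rw [mrank_indep_aux M (hindep_proper _ hsubC hneC) (hEfin.subset (hsubC.trans hCE))]
    rw [Set.singleton_union, Set.ncard_insert_of_notMem heD hDfin', hre]
    omega
  -- conclude
  intro z hz
  by_cases hze : z = e
  · exact Or.inr (by simp [hze])
  · left
    refine ⟨by rw [hNE]; exact ⟨hCE hz, hze⟩, Or.inr ⟨C \ {e}, hcirc, ⟨hxC, hxe⟩, hz, hze⟩⟩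
end

section
/- Let M be a finite matroid and k ≥ 0. Let e₁, …, e_k be distinct elements of M and let C₀, C₁, …, C_k be subsets of the ground set of M such that |C_i| ≥ 3 for all 0 ≤ i ≤ k, C_{i−1} ∩ C_i = {e_i} for all 1 ≤ i ≤ k, and C_i ∩ C_j = ∅ whenever |i − j| ≥ 2. Let e₀ ∈ C₀ \ {e₁}, and for each 1 ≤ i ≤ k let e'_i ∈ C_{i−1} \ {e_{i−1}, e_i}. Define matroids by M₀ = M and M_i = M_{i−1} / (C_{i−1} \ {e_i, e'_i}) for 1 ≤ i ≤ k. If C_i is a circuit of M_i for every 0 ≤ i ≤ k, then M contains a circuit of size at least k + 3 that contains e₀. -/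
section LongCircuitHelpers

open Set

variable {α : Type}

lemma IsCircuitOf.subset_ground {M : Matroid α} {C : Set α} (h : IsCircuitOf M C) : C ⊆ M.E :=
  h.1.2

lemma IsCircuitOf.indep_of_ssubset {M : Matroid α} {C S : Set α} (h : IsCircuitOf M C)
    (hS : S ⊆ C) (hne : S ≠ C) : M.Indep S := by
  by_contra hdep
  exact hne (h.2 S ⟨hdep, hS.trans h.subset_ground⟩ hS)

lemma IsCircuitOf.diff_singleton_indep {M : Matroid α} {C : Set α} (h : IsCircuitOf M C)
    {x : α} (hx : x ∈ C) : M.Indep (C \ {x}) := by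
  refine h.indep_of_ssubset diff_subset (fun hEq => ?_)
  rw [← hEq] at hx
  simp at hx

lemma IsCircuitOf.mem_closure {M : Matroid α} {C : Set α} (h : IsCircuitOf M C)
    {x : α} (hx : x ∈ C) : x ∈ M.closure (C \ {x}) := by
  rw [(h.diff_singleton_indep hx).mem_closure_iff_of_notMem (by simp)]
  rw [insert_diff_singleton, insert_eq_of_mem hx]
  exact h.1

lemma exists_circuitOf_subset {M : Matroid α} (hE : M.E.Finite) {D : Set α} (hD : M.Dep D) :
    ∃ C, C ⊆ D ∧ IsCircuitOf M C := by
  suffices h : ∀ (n : ℕ) (D : Set α), D.ncard ≤ n → M.Dep D → ∃ C, C ⊆ D ∧ IsCircuitOf M C from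
    h D.ncard D le_rfl hD
  intro n
  induction n with
  | zero =>
    intro D hle hD
    have hfin : D.Finite := hE.subset hD.subset_ground
    have hD0 : D = ∅ := by rw [← Set.ncard_eq_zero hfin]; omega
    subst hD0
    exact absurd M.empty_indep hD.1
  | succ n ih =>
    intro D hle hD
    by_cases hmin : ∀ S, M.Dep S → S ⊆ D → S = D
    · exact ⟨D, subset_rfl, hD, hmin⟩
    · push_neg at hmin
      obtain ⟨S, hS, hSD, hne⟩ := hmin
      have hlt : S.ncard < D.ncard :=
        Set.ncard_lt_ncard (ssubset_of_subset_of_ne hSD hne) (hE.subset hD.subset_ground)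
      obtain ⟨C, hCS, hC⟩ := ih S (by omega) hS
      exact ⟨C, hCS.trans hSD, hC⟩

lemma strong_circuit_elim {M : Matroid α} (hE : M.E.Finite) {C₁ C₂ : Set α} {e f : α}
    (h₁ : IsCircuitOf M C₁) (h₂ : IsCircuitOf M C₂) (he₁ : e ∈ C₁) (he₂ : e ∈ C₂)
    (hf₁ : f ∈ C₁) (hf₂ : f ∉ C₂) :
    ∃ Z, IsCircuitOf M Z ∧ f ∈ Z ∧ Z ⊆ (C₁ ∪ C₂) \ {e} := by
  set S := (C₁ ∪ C₂) \ {e, f} with hSdef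
  have hSE : S ⊆ M.E := diff_subset.trans (union_subset h₁.subset_ground h₂.subset_ground)
  have hfe : f ≠ e := fun h => hf₂ (h ▸ he₂)
  have hecl : e ∈ M.closure S := by
    refine M.closure_subset_closure (fun x hx => ?_) (h₂.mem_closure he₂)
    refine ⟨Or.inr hx.1, fun hmem => ?_⟩
    rcases hmem with h' | h'
    · exact hx.2 h'
    · exact hf₂ (h' ▸ hx.1)
  have hfcl : f ∈ M.closure S := by
    have h1 : f ∈ M.closure (C₁ \ {f}) := h₁.mem_closure hf₁
    have h2 : C₁ \ {f} ⊆ insert e S := by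
      intro x hx
      by_cases hxe : x = e
      · exact Or.inl hxe
      · refine Or.inr ⟨Or.inl hx.1, fun hmem => ?_⟩
        rcases hmem with h' | h'
        · exact hxe h'
        · exact hx.2 h'
    have h3 : M.closure (insert e S) = M.closure S :=
      Matroid.closure_insert_eq_of_mem_closure hecl
    exact h3 ▸ M.closure_subset_closure h2 h1
  obtain ⟨I, hI⟩ := M.exists_isBasis S hSE
  have hfclI : f ∈ M.closure I := by rw [hI.closure_eq_closure]; exact hfcl
  have hfS : f ∉ S := by simp [hSdef]
  have hfI : f ∉ I := fun h => hfS (hI.subset h)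
  have hdep : M.Dep (insert f I) := by
    rwa [← hI.indep.mem_closure_iff_of_notMem hfI]
  obtain ⟨Z, hZI, hZ⟩ := exists_circuitOf_subset hE hdep
  have hfZ : f ∈ Z := by
    by_contra hfZ
    have hsub : Z ⊆ I := fun x hx => ((hZI hx).resolve_left (fun h => hfZ (h ▸ hx)))
    exact hZ.1.1 (hI.indep.subset hsub)
  refine ⟨Z, hZ, hfZ, fun x hx => ?_⟩
  rcases hZI hx with rfl | hxI
  · exact ⟨Or.inl hf₁, hfe⟩
  · have h4 := hI.subset hxI
    exact ⟨h4.1, fun h => h4.2 (Or.inl h)⟩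

lemma mrank_le_ncard (M : Matroid α) {X : Set α} (hX : X.Finite) : mrank M X ≤ X.ncard := by
  have hne : {n : ℕ | ∃ I : Set α, I ⊆ X ∧ M.Indep I ∧ I.ncard = n}.Nonempty :=
    ⟨0, ∅, empty_subset _, M.empty_indep, Set.ncard_empty _⟩
  apply csSup_le hne
  rintro n ⟨I, hIX, -, rfl⟩
  exact Set.ncard_le_ncard hIX hX

lemma mrank_eq_ncard_of_indep {M : Matroid α} {I : Set α} (hI : M.Indep I) (hfin : I.Finite) :
    mrank M I = I.ncard :=
  le_antisymm (mrank_le_ncard M hfin)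
    (le_csSup ⟨I.ncard, by rintro n ⟨J, hJ, -, rfl⟩; exact Set.ncard_le_ncard hJ hfin⟩
      ⟨I, subset_rfl, hI, rfl⟩)

lemma indep_of_mrank_eq_ncard {M : Matroid α} {X : Set α} (hX : X.Finite)
    (h : mrank M X = X.ncard) : M.Indep X := by
  have hne : {n : ℕ | ∃ I : Set α, I ⊆ X ∧ M.Indep I ∧ I.ncard = n}.Nonempty :=
    ⟨0, ∅, empty_subset _, M.empty_indep, Set.ncard_empty _⟩
  have hbdd : BddAbove {n : ℕ | ∃ I : Set α, I ⊆ X ∧ M.Indep I ∧ I.ncard = n} :=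
    ⟨X.ncard, by rintro n ⟨J, hJ, -, rfl⟩; exact Set.ncard_le_ncard hJ hX⟩
  obtain ⟨I, hIX, hI, hcard⟩ := Nat.sSup_mem hne hbdd
  have hIeq : I = X := Set.eq_of_subset_of_ncard_le hIX (by rw [hcard]; exact h.symm.le) hX
  exact hIeq ▸ hI

lemma contraction_indep_iff {M N : Matroid α} {F : Set α} (hE : M.E.Finite)
    (hN : IsContractionBy M F N) (hF : M.Indep F) (I : Set α) :
    N.Indep I ↔ I ⊆ M.E \ F ∧ M.Indep (F ∪ I) := by
  have hFfin : F.Finite := hE.subset hF.subset_ground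
  rw [hN.2]
  constructor
  · rintro ⟨hIE, hIfin, hr⟩
    refine ⟨hIE, indep_of_mrank_eq_ncard (hFfin.union hIfin) ?_⟩
    rw [hr, mrank_eq_ncard_of_indep hF hFfin,
      Set.ncard_union_eq (subset_diff.mp hIE).2.symm hFfin hIfin]
  · rintro ⟨hIE, hFI⟩
    have hIfin : I.Finite := hE.subset (fun x hx => (hIE hx).1)
    refine ⟨hIE, hIfin, ?_⟩
    rw [mrank_eq_ncard_of_indep hFI (hFfin.union hIfin), mrank_eq_ncard_of_indep hF hFfin,
      Set.ncard_union_eq (subset_diff.mp hIE).2.symm hFfin hIfin]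


theorem aux_chain {α : Type} (k : ℕ) :
    ∀ (M : Matroid α), M.E.Finite →
    ∀ (e : ℕ → α) (C : ℕ → Set α) (e' : ℕ → α) (Ms : ℕ → Matroid α),
    (∀ i j, 1 ≤ i → i ≤ k → 1 ≤ j → j ≤ k → e i = e j → i = j) →
    (∀ i, i ≤ k → 3 ≤ (C i).ncard) →
    (∀ i, i < k → C i ∩ C (i + 1) = {e (i + 1)}) →
    e 0 ∈ C 0 → (1 ≤ k → e 0 ≠ e 1) →
    (∀ i, i < k → e' i ∈ C i ∧ e' i ≠ e i ∧ e' i ≠ e (i + 1)) →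
    Ms 0 = M →
    (∀ i, i < k → IsContractionBy (Ms i) (C i \ {e (i + 1), e' i}) (Ms (i + 1))) →
    (∀ i, i ≤ k → IsCircuitOf (Ms i) (C i)) →
    ∃ Z, IsCircuitOf M Z ∧ e 0 ∈ Z ∧ k + 3 ≤ Z.ncard := by
  induction k with
  | zero =>
    intro M hE e C e' Ms hinj hcard hinter he0 he01 he'h hMs0 hstep hcirc
    exact ⟨C 0, hMs0 ▸ hcirc 0 le_rfl, he0, hcard 0 le_rfl⟩
  | succ k ih =>
    intro M hE e C e' Ms hinj hcard hinter he0 he01 he'h hMs0 hstep hcirc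
    set N := Ms 1 with hNdef
    have hC0 : IsCircuitOf M (C 0) := hMs0 ▸ hcirc 0 (by omega)
    have hC0E : C 0 ⊆ M.E := hC0.subset_ground
    have he'0 := he'h 0 (by omega)
    have he1C : e 1 ∈ C 0 ∩ C 1 := by
      rw [hinter 0 (by omega)]; rfl
    have hne10 : e 0 ≠ e 1 := he01 (by omega)
    have hne1'0 : e 1 ≠ e' 0 := fun h => he'0.2.2 h.symm
    set F := C 0 \ {e 1, e' 0} with hFdef
    have hFC0 : F ⊆ C 0 := diff_subset
    have hFne : F ≠ C 0 := fun h => ((h ▸ he1C.1 : e 1 ∈ F)).2 (Or.inl rfl)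
    have hF : M.Indep F := hC0.indep_of_ssubset hFC0 hFne
    have hN : IsContractionBy M F N := hMs0 ▸ hstep 0 (by omega)
    have hNE : N.E = M.E \ F := hN.1
    have hNEfin : N.E.Finite := hNE ▸ hE.diff (t := F)
    have hNind : ∀ I, N.Indep I ↔ I ⊆ M.E \ F ∧ M.Indep (F ∪ I) :=
      contraction_indep_iff hE hN hF
    obtain ⟨Z', hZ', he1Z', hZ'card⟩ :=
      ih N hNEfin (fun i => e (i + 1)) (fun i => C (i + 1)) (fun i => e' (i + 1))
        (fun i => Ms (i + 1))
        (fun i j hi hik hj hjk hij => by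
          have := hinj (i + 1) (j + 1) (by omega) (by omega) (by omega) (by omega) hij
          omega)
        (fun i hik => hcard (i + 1) (by omega))
        (fun i hik => hinter (i + 1) (by omega))
        he1C.2
        (fun hk h => by
          have := hinj 1 2 (by omega) (by omega) (by omega) (by omega) h
          omega)
        (fun i hik => he'h (i + 1) (by omega))
        rfl
        (fun i hik => hstep (i + 1) (by omega))
        (fun i hik => hcirc (i + 1) (by omega))
    have hZ'E : Z' ⊆ N.E := hZ'.subset_ground
    have hZ'fin : Z'.Finite := hNEfin.subset hZ'E
    have he'0E : e' 0 ∈ M.E := hC0E he'0.1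
    have he'0F : e' 0 ∉ F := fun h => h.2 (Or.inr rfl)
    have he1F : e 1 ∉ F := fun h => h.2 (Or.inl rfl)
    have hpairE : ({e 1, e' 0} : Set α) ⊆ N.E := by
      rw [hNE]
      rintro x (rfl | rfl)
      · exact ⟨hC0E he1C.1, he1F⟩
      · exact ⟨he'0E, he'0F⟩
    have hFP : F ∪ {e 1, e' 0} = C 0 := by
      rw [hFdef]
      exact Set.diff_union_of_subset (by rintro x (rfl | rfl); exacts [he1C.1, he'0.1])
    have hpair : IsCircuitOf N {e 1, e' 0} := by
      constructor
      · refine ⟨fun hind => ?_, hpairE⟩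
        rw [hNind, hFP] at hind
        exact hC0.1.1 hind.2
      · intro D hD hDsub
        by_contra hne
        obtain ⟨y, hy, hyD⟩ : ∃ y ∈ ({e 1, e' 0} : Set α), y ∉ D := by
          by_contra hall
          push_neg at hall
          exact hne (subset_antisymm hDsub hall)
        have hyF : y ∉ F := by rcases hy with rfl | rfl; exacts [he1F, he'0F]
        have hsub2 : F ∪ D ⊆ C 0 \ {y} := by
          rintro x (hx | hx)
          · exact ⟨hFC0 hx, fun h => hyF (mem_singleton_iff.mp h ▸ hx)⟩
          · refine ⟨?_, fun h => hyD (mem_singleton_iff.mp h ▸ hx)⟩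
            rcases hDsub hx with rfl | rfl; exacts [he1C.1, he'0.1]
        have hyC0 : y ∈ C 0 := by rcases hy with rfl | rfl; exacts [he1C.1, he'0.1]
        have hind : N.Indep D := by
          rw [hNind]
          exact ⟨hDsub.trans (hNE ▸ hpairE),
            (hC0.diff_singleton_indep hyC0).subset hsub2⟩
        exact hD.1 hind
    have he'0Z' : e' 0 ∉ Z' := by
      intro hmem
      have hsub : ({e 1, e' 0} : Set α) ⊆ Z' := by rintro x (rfl | rfl); exacts [he1Z', hmem]
      have heq := hZ'.2 _ hpair.1 hsub
      rw [← heq, Set.ncard_pair hne1'0] at hZ'card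
      omega
    set W := insert (e' 0) (Z' \ {e 1}) with hWdef
    have hWNE : W ⊆ N.E := insert_subset (hpairE (Or.inr rfl)) (diff_subset.trans hZ'E)
    have hWMF : W ⊆ M.E \ F := hNE ▸ hWNE
    have hWfin : W.Finite := hNEfin.subset hWNE
    have he'0W : e' 0 ∉ Z' \ {e 1} := fun h => he'0Z' h.1
    have hWcard : W.ncard = Z'.ncard := by
      rw [hWdef, Set.ncard_insert_of_notMem he'0W hZ'fin.diff,
        Set.ncard_diff_singleton_of_mem he1Z']
      omega
    have hpair_del : ({e 1, e' 0} : Set α) \ {e' 0} = {e 1} := by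
      ext x
      simp only [mem_diff, mem_insert_iff, mem_singleton_iff]
      constructor
      · rintro ⟨(rfl | rfl), h2⟩
        · rfl
        · exact absurd rfl h2
      · rintro rfl
        exact ⟨Or.inl rfl, hne1'0⟩
    have hWdelb : W \ {e' 0} = Z' \ {e 1} := by
      rw [hWdef, Set.insert_diff_self_of_notMem he'0W]
    have hWdep : ¬ N.Indep W := by
      intro hind
      have hbcl : e' 0 ∈ N.closure {e 1} := by
        have h := hpair.mem_closure (x := e' 0) (Or.inr rfl)
        rwa [hpair_del] at h
      have hacl : e 1 ∈ N.closure (Z' \ {e 1}) := hZ'.mem_closure he1Z'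
      have hbcl2 : e' 0 ∈ N.closure (Z' \ {e 1}) :=
        Matroid.closure_subset_closure_of_subset_closure (singleton_subset_iff.mpr hacl) hbcl
      have hind' : N.Indep (Z' \ {e 1}) := hind.subset (subset_insert _ _)
      rw [hind'.mem_closure_iff_of_notMem he'0W] at hbcl2
      exact hbcl2.1 hind
    have hWdel : ∀ x ∈ W, N.Indep (W \ {x}) := by
      intro x hx
      rcases eq_or_ne x (e' 0) with rfl | hxb
      · rw [hWdelb]
        exact hZ'.diff_singleton_indep he1Z'
      · have hxZ : x ∈ Z' \ {e 1} := by
          rcases hx with rfl | h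
          · exact absurd rfl hxb
          · exact h
        by_contra hdep'
        have hdepD : N.Dep (W \ {x}) := ⟨hdep', diff_subset.trans hWNE⟩
        obtain ⟨D, hDsub, hD⟩ := exists_circuitOf_subset hNEfin hdepD
        have hbD : e' 0 ∈ D := by
          by_contra hbD
          have hsub : D ⊆ Z' \ {e 1} := by
            intro y hy
            rcases (hDsub hy).1 with rfl | h2
            · exact absurd hy hbD
            · exact h2
          exact hD.1.1 ((hZ'.diff_singleton_indep he1Z').subset hsub)
        obtain ⟨g, hgD, hgb⟩ : ∃ g ∈ D, g ≠ e' 0 := by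
          by_contra hg
          push_neg at hg
          have hDeq : D = {e' 0} :=
            subset_antisymm (fun y hy => hg y hy) (singleton_subset_iff.mpr hbD)
          have hindb : N.Indep {e' 0} := by
            refine hpair.indep_of_ssubset (by rintro y rfl; exact Or.inr rfl) (fun h => ?_)
            have : e 1 ∈ ({e' 0} : Set α) := h ▸ (Or.inl rfl)
            exact hne1'0 this
          exact hD.1.1 (hDeq ▸ hindb)
        have hgW := hDsub hgD
        have hgZ : g ∈ Z' \ {e 1} := by
          rcases hgW.1 with rfl | h2
          · exact absurd rfl hgb
          · exact h2
        have hgx : g ≠ x := fun h => hgW.2 (h ▸ rfl)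
        have hg_pair : g ∉ ({e 1, e' 0} : Set α) := by
          rintro (rfl | rfl)
          · exact hgZ.2 rfl
          · exact hgb rfl
        obtain ⟨Y, hY, hgY, hYsub⟩ :=
          strong_circuit_elim hNEfin hD hpair hbD (Or.inr rfl) hgD hg_pair
        have hYZ : Y ⊆ Z' \ {x} := by
          intro y hy
          have h1 := hYsub hy
          rcases h1.1 with h2 | h2
          · have h3 := hDsub h2
            rcases h3.1 with rfl | h4
            · exact absurd rfl h1.2
            · exact ⟨h4.1, h3.2⟩
          · rcases h2 with rfl | rfl
            · exact ⟨he1Z', fun hh => hxZ.2 ((mem_singleton_iff.mp hh) ▸ rfl)⟩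
            · exact absurd rfl h1.2
        exact hY.1.1 ((hZ'.diff_singleton_indep hxZ.1).subset hYZ)
    have hFW_dep : M.Dep (F ∪ W) :=
      ⟨fun hind => hWdep ((hNind W).mpr ⟨hWMF, hind⟩),
        union_subset (hFC0.trans hC0E) (fun x hx => (hWMF hx).1)⟩
    obtain ⟨D, hDsub, hD⟩ := exists_circuitOf_subset hE hFW_dep
    have hWD : W ⊆ D := by
      by_contra hc
      obtain ⟨w, hwW, hwD⟩ := not_subset.mp hc
      have hDW' : D ⊆ F ∪ (W \ {w}) := by
        intro y hy
        rcases hDsub hy with h1 | h1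
        · exact Or.inl h1
        · exact Or.inr ⟨h1, fun hh => hwD ((mem_singleton_iff.mp hh) ▸ hy)⟩
      have hind : M.Indep (F ∪ (W \ {w})) := ((hNind _).mp (hWdel w hwW)).2
      exact hD.1.1 (hind.subset hDW')
    have hDfin : D.Finite := hE.subset hD.subset_ground
    have he0F : e 0 ∈ F := by
      refine ⟨he0, ?_⟩
      rintro (h | h)
      · exact hne10 h
      · exact he'0.2.1 h.symm
    have he0W : e 0 ∉ W := fun h => (hWMF h).2 he0F
    by_cases he0D : e 0 ∈ D
    · refine ⟨D, hD, he0D, ?_⟩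
      have hsub : insert (e 0) W ⊆ D := insert_subset he0D hWD
      have hle := Set.ncard_le_ncard hsub hDfin
      rw [Set.ncard_insert_of_notMem he0W hWfin] at hle
      omega
    · obtain ⟨Z, hZ, he0Z, hZsub⟩ :=
        strong_circuit_elim hE hC0 hD (e := e' 0) (f := e 0) he'0.1 (hWD (Or.inl rfl)) he0 he0D
      have hZfin : Z.Finite := hE.subset hZ.subset_ground
      have hZF : Z \ F ⊆ Z' := by
        intro x hx
        have h1 := hZsub hx.1
        rcases h1.1 with h2 | h2
        · have h3 : x ∈ ({e 1, e' 0} : Set α) := by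
            by_contra h4
            exact hx.2 ⟨h2, h4⟩
          rcases h3 with rfl | rfl
          · exact he1Z'
          · exact absurd rfl h1.2
        · rcases hDsub h2 with h3 | h3
          · exact absurd h3 hx.2
          · rcases h3 with rfl | h4
            · exact absurd rfl h1.2
            · exact h4.1
      have hZFdep : N.Dep (Z \ F) := by
        refine ⟨fun hind => ?_, ?_⟩
        · have h5 : M.Indep (F ∪ (Z \ F)) := ((hNind _).mp hind).2
          refine hZ.1.1 (h5.subset (fun y hy => ?_))
          by_cases h : y ∈ F
          · exact Or.inl h
          · exact Or.inr ⟨hy, h⟩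
        · rw [hNE]
          exact fun y hy => ⟨hZ.subset_ground hy.1, hy.2⟩
      have hZFeq : Z \ F = Z' := hZ'.2 _ hZFdep hZF
      refine ⟨Z, hZ, he0Z, ?_⟩
      have hss : Z \ F ⊂ Z :=
        ssubset_of_subset_of_ne diff_subset
          (fun h => (show e 0 ∉ Z \ F from fun hh => hh.2 he0F) (h.symm ▸ he0Z))
      have hlt := Set.ncard_lt_ncard hss hZfin
      rw [hZFeq] at hlt
      omega

end LongCircuitHelpers

/-- **Under the chain-of-circuits hypotheses, `M` has a circuit of size at least `k + 3` containing `e₀`.** -/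
theorem exists_long_circuit_of_circuit_chain {α : Type} (M : Matroid α) [M.Finite] (k : ℕ)
    -- `e 0` is the element `e₀ ∈ C₀`; `e 1, …, e k` are the elements `e₁, …, e_k`.
    (e : Fin (k + 1) → α) (he : ∀ i : Fin (k + 1), e i ∈ M.E)
    -- the elements `e₁, …, e_k` are distinct
    (hinj : ∀ i j : Fin (k + 1), 1 ≤ i.val → 1 ≤ j.val → e i = e j → i = j)
    (C : Fin (k + 1) → Set α) (hCE : ∀ i : Fin (k + 1), C i ⊆ M.E)
    -- `|C_i| ≥ 3` for all `i`
    (hcard : ∀ i : Fin (k + 1), 3 ≤ (C i).ncard)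
    -- `C_{i-1} ∩ C_i = {e_i}` for `1 ≤ i ≤ k`
    (hinter : ∀ i : Fin k, C i.castSucc ∩ C i.succ = {e i.succ})
    -- `C_i ∩ C_j = ∅` whenever `|i - j| ≥ 2`
    (hdisj : ∀ i j : Fin (k + 1), i.val + 2 ≤ j.val → C i ∩ C j = ∅)
    -- `e₀ ∈ C₀ \ {e₁}`
    (he0 : e 0 ∈ C 0) (he01 : ∀ i : Fin (k + 1), i.val = 1 → e 0 ≠ e i)
    -- `e'_i ∈ C_{i-1} \ {e_{i-1}, e_i}` for `1 ≤ i ≤ k` (with `e' i` playing `e'_{i+1}`)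
    (e' : Fin k → α)
    (he' : ∀ i : Fin k, e' i ∈ C i.castSucc ∧ e' i ≠ e i.castSucc ∧ e' i ≠ e i.succ)
    -- `M₀ = M` and `M_i = M_{i-1} / (C_{i-1} \ {e_i, e'_i})` for `1 ≤ i ≤ k`
    (Ms : Fin (k + 1) → Matroid α) (hMs0 : Ms 0 = M)
    (hMsStep : ∀ i : Fin k,
      IsContractionBy (Ms i.castSucc) (C i.castSucc \ {e i.succ, e' i}) (Ms i.succ))
    -- `C_i` is a circuit of `M_i` for every `i`
    (hcirc : ∀ i : Fin (k + 1), IsCircuitOf (Ms i) (C i)) :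
    -- conclusion: `M` has a circuit of size at least `k + 3` containing `e₀`
    ∃ Z : Set α, IsCircuitOf M Z ∧ e 0 ∈ Z ∧ k + 3 ≤ Z.ncard := by
  classical
  have hE : M.E.Finite := M.ground_finite
  set eN : ℕ → α := fun i => if h : i < k + 1 then e ⟨i, h⟩ else e 0 with heNdef
  set CN : ℕ → Set α := fun i => if h : i < k + 1 then C ⟨i, h⟩ else ∅ with hCNdef
  set e'N : ℕ → α := fun i => if h : i < k then e' ⟨i, h⟩ else e 0 with he'Ndef
  set MsN : ℕ → Matroid α := fun i => if h : i < k + 1 then Ms ⟨i, h⟩ else M with hMsNdef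
  have heNeq : ∀ (i : ℕ) (h : i < k + 1), eN i = e ⟨i, h⟩ := fun i h => dif_pos h
  have hCNeq : ∀ (i : ℕ) (h : i < k + 1), CN i = C ⟨i, h⟩ := fun i h => dif_pos h
  have he'Neq : ∀ (i : ℕ) (h : i < k), e'N i = e' ⟨i, h⟩ := fun i h => dif_pos h
  have hMsNeq : ∀ (i : ℕ) (h : i < k + 1), MsN i = Ms ⟨i, h⟩ := fun i h => dif_pos h
  have h00 : (⟨0, by omega⟩ : Fin (k + 1)) = 0 := by
    ext
    simp
  obtain ⟨Z, h1, h2, h3⟩ :=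
    aux_chain k M hE eN CN e'N MsN
      (by
        intro i j hi hik hj hjk hij
        have hik' : i < k + 1 := by omega
        have hjk' : j < k + 1 := by omega
        rw [heNeq i hik', heNeq j hjk'] at hij
        have := hinj ⟨i, hik'⟩ ⟨j, hjk'⟩ hi hj hij
        exact congrArg Fin.val this)
      (by
        intro i hik
        rw [hCNeq i (by omega)]
        exact hcard _)
      (by
        intro i hik
        rw [hCNeq i (by omega), hCNeq (i + 1) (by omega), heNeq (i + 1) (by omega)]
        exact hinter ⟨i, hik⟩)
      (by
        rw [heNeq 0 (by omega), hCNeq 0 (by omega), h00]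
        exact he0)
      (by
        intro hk
        rw [heNeq 0 (by omega), heNeq 1 (by omega), h00]
        exact he01 ⟨1, by omega⟩ rfl)
      (by
        intro i hik
        rw [he'Neq i hik, hCNeq i (by omega), heNeq i (by omega), heNeq (i + 1) (by omega)]
        exact he' ⟨i, hik⟩)
      (by
        rw [hMsNeq 0 (by omega), h00]
        exact hMs0)
      (by
        intro i hik
        rw [hMsNeq i (by omega), hMsNeq (i + 1) (by omega), hCNeq i (by omega),
          heNeq (i + 1) (by omega), he'Neq i hik]
        exact hMsStep ⟨i, hik⟩)
      (by
        intro i hik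
        rw [hMsNeq i (by omega), hCNeq i (by omega)]
        exact hcirc ⟨i, by omega⟩)
  rw [heNeq 0 (by omega), h00] at h2
  exact ⟨Z, h1, h2, h3⟩
end

section
/- Let d ≥ 2 and let C_d be the matroid on a d-element ground set whose independent sets are exactly the proper subsets of the ground set (equivalently, the uniform matroid U_{d−1,d}, whose unique circuit is the whole ground set). Then in every depth-decomposition (T, f) of C_d, the root of T has exactly one child. -/
-- helper lemmas
lemma anc_trans_s13 {V : Type} {p : V → V} {u v w : V} (h1 : Anc p u v) (h2 : Anc p w u) :
    Anc p w v := by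
  obtain ⟨n, hn⟩ := h1; obtain ⟨m, hm⟩ := h2
  exact ⟨m + n, by rw [Function.iterate_add_apply, hn, hm]⟩

lemma anc_root_eq {V : Type} {p : V → V} {root v : V} (hr : p root = root)
    (h : Anc p v root) : v = root := by
  obtain ⟨n, hn⟩ := h
  rw [Function.iterate_fixed hr] at hn
  exact hn.symm

/-- comparability of ancestors of a vertex -/
lemma anc_comp {V : Type} {p : V → V} {x u w : V} (h1 : Anc p u x) (h2 : Anc p w x) :
    Anc p u w ∨ Anc p w u := by
  obtain ⟨n, hn⟩ := h1; obtain ⟨m, hm⟩ := h2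
  rcases le_total n m with hle | hle
  · right
    refine ⟨m - n, ?_⟩
    rw [← hn, ← Function.iterate_add_apply, Nat.sub_add_cancel hle]
    exact hm
  · left
    refine ⟨n - m, ?_⟩
    rw [← hm, ← Function.iterate_add_apply, Nat.sub_add_cancel hle]
    exact hn

/-- proper ancestor of a child of the root is the root -/
lemma anc_of_child {V : Type} {p : V → V} {root c v : V} (hr : p root = root)
    (hc : p c = root) (h : Anc p v c) : v = c ∨ v = root := by
  obtain ⟨n, hn⟩ := h
  cases n with
  | zero => left; exact hn.symm
  | succ k =>
    right
    rw [Function.iterate_succ_apply, hc, Function.iterate_fixed hr] at hn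
    exact hn.symm

lemma exists_child {V : Type} {root : V} {p : V → V} (hr : p root = root)
    (hreach : ∀ v : V, ∃ n : ℕ, p^[n] v = root) {v : V} (hv : v ≠ root) :
    ∃ c : V, c ≠ root ∧ p c = root ∧ Anc p c v := by
  classical
  have hex := hreach v
  set n := Nat.find hex with hn
  have hspec : p^[n] v = root := Nat.find_spec hex
  have hn1 : n ≠ 0 := by
    intro h0
    rw [h0] at hspec; exact hv hspec
  refine ⟨p^[n-1] v, ?_, ?_, ⟨n - 1, rfl⟩⟩
  · exact Nat.find_min hex (Nat.sub_lt (Nat.pos_of_ne_zero hn1) one_pos)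
  · have h2 : p^[(n-1)+1] v = root := by
      rw [Nat.sub_add_cancel (Nat.one_le_iff_ne_zero.mpr hn1)]
      exact hspec
    rw [Function.iterate_succ_apply'] at h2
    exact h2

lemma mrank_indep {α : Type} {M : Matroid α} {X : Set α} (hX : M.Indep X) (hfin : X.Finite) :
    mrank M X = X.ncard := by
  unfold mrank
  apply le_antisymm
  · refine csSup_le ?_ ?_
    · exact ⟨0, ∅, Set.empty_subset _, M.empty_indep, Set.ncard_empty _⟩
    rintro m ⟨I, hIX, _, rfl⟩
    exact Set.ncard_le_ncard hIX hfin
  · apply le_csSup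
    · exact ⟨X.ncard, by rintro m ⟨I, hIX, _, rfl⟩; exact Set.ncard_le_ncard hIX hfin⟩
    · exact ⟨X, subset_rfl, hX, rfl⟩

lemma mrank_ground {α : Type} {M : Matroid α} {d : ℕ} (hd : 2 ≤ d) (hfin : M.E.Finite)
    (hcard : M.E.ncard = d) (hI : ∀ I : Set α, M.Indep I ↔ I ⊂ M.E) :
    mrank M M.E = d - 1 := by
  obtain ⟨x, hx⟩ : M.E.Nonempty := by
    rw [← Set.ncard_pos hfin, hcard]; omega
  unfold mrank
  apply le_antisymm
  · refine csSup_le ?_ ?_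
    · exact ⟨0, ∅, Set.empty_subset _, M.empty_indep, Set.ncard_empty _⟩
    rintro m ⟨I, hIX, hind, rfl⟩
    have : I ⊂ M.E := (hI I).mp hind
    have := Set.ncard_lt_ncard this hfin
    omega
  · apply le_csSup
    · refine ⟨d, ?_⟩
      rintro m ⟨I, hIX, _, rfl⟩
      rw [← hcard]; exact Set.ncard_le_ncard hIX hfin
    · refine ⟨M.E \ {x}, Set.diff_subset, ?_, by rw [Set.ncard_diff_singleton_of_mem hx, hcard]⟩
      rw [hI]
      exact Set.sdiff_singleton_ssubset.mpr hx

lemma two_children_false {α V : Type} (M : Matroid α)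
    (d : ℕ) (hd : 2 ≤ d) (hfin : M.E.Finite) (hcard : M.E.ncard = d)
    (hI : ∀ I : Set α, M.Indep I ↔ I ⊂ M.E)
    (root : V) (parent : V → V) (f : α → V)
    (hV : Finite V) (hroot : parent root = root)
    (hrank : mrank M M.E = Set.ncard {v : V | v ≠ root})
    (hle : ∀ X : Set α, X ⊆ M.E →
      mrank M X ≤ Set.ncard {v : V | v ≠ root ∧ ∃ e ∈ X, Anc parent v (f e)})
    (c1 c2 : V) (hc1ne : c1 ≠ root) (hc1par : parent c1 = root)
    (hc2ne : c2 ≠ root) (hc2par : parent c2 = root) (hne : c1 ≠ c2) : False := by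
  classical
  have hrE : mrank M M.E = d - 1 := mrank_ground hd hfin hcard hI
  set R : Set V := {v : V | v ≠ root} with hR
  have hRfin : R.Finite := Set.toFinite _
  have hRcard : R.ncard = d - 1 := by rw [← hrank, hrE]
  set S1 : Set V := {v : V | v ≠ root ∧ Anc parent c1 v} with hS1
  have hS1fin : S1.Finite := Set.toFinite _
  have hS1R : S1 ⊆ R := fun v hv => hv.1
  have hc1S1 : c1 ∈ S1 := ⟨hc1ne, ⟨0, rfl⟩⟩
  have hc2S1 : c2 ∉ S1 := by
    rintro ⟨-, hanc⟩
    rcases anc_of_child hroot hc2par hanc with h | h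
    · exact hne h
    · exact hc1ne h
  set X1 : Set α := {e ∈ M.E | Anc parent c1 (f e)} with hX1
  set X2 : Set α := M.E \ X1 with hX2
  have hX1sub : X1 ⊆ M.E := fun e he => he.1
  have hX2sub : X2 ⊆ M.E := Set.diff_subset
  have hX1fin : X1.Finite := hfin.subset hX1sub
  have hX2fin : X2.Finite := hfin.subset hX2sub
  -- T*(X1) ⊆ S1
  have hT1 : {v : V | v ≠ root ∧ ∃ e ∈ X1, Anc parent v (f e)} ⊆ S1 := by
    rintro v ⟨hv, e, ⟨heE, hanc1⟩, hanc⟩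
    refine ⟨hv, ?_⟩
    rcases anc_comp hanc hanc1 with h | h
    · rcases anc_of_child hroot hc1par h with h' | h'
      · rw [h']; exact ⟨0, rfl⟩
      · exact absurd h' hv
    · exact h
  -- T*(X2) ⊆ R \ S1
  have hT2 : {v : V | v ≠ root ∧ ∃ e ∈ X2, Anc parent v (f e)} ⊆ R \ S1 := by
    rintro v ⟨hv, e, he2, hanc⟩
    refine ⟨hv, fun hvS1 => ?_⟩
    exact he2.2 ⟨he2.1, anc_trans_s13 hanc hvS1.2⟩
  have B1 : mrank M X1 ≤ S1.ncard :=
    le_trans (hle X1 hX1sub) (Set.ncard_le_ncard hT1 hS1fin)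
  have B2 : mrank M X2 ≤ (R \ S1).ncard :=
    le_trans (hle X2 hX2sub) (Set.ncard_le_ncard hT2 (hRfin.subset Set.diff_subset))
  have hRS1 : (R \ S1).ncard = R.ncard - S1.ncard := Set.ncard_diff hS1R hS1fin
  have hS1le : S1.ncard ≤ R.ncard := Set.ncard_le_ncard hS1R hRfin
  have hS1pos : 0 < S1.ncard := (Set.ncard_pos hS1fin).mpr ⟨c1, hc1S1⟩
  have hc2R : c2 ∈ R := hc2ne
  have hS1lt : S1.ncard < R.ncard :=
    Set.ncard_lt_ncard (Set.ssubset_iff_of_subset hS1R |>.mpr ⟨c2, hc2R, hc2S1⟩) hRfin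
  by_cases hX1E : X1 = M.E
  · -- whole ground set under c1: rank E ≤ |S1| < |R| = d-1, contra
    rw [hX1E, hrE] at B1
    omega
  · by_cases hX1e : X1 = ∅
    · -- X2 = E
      have : X2 = M.E := by rw [hX2, hX1e, Set.diff_empty]
      rw [this, hrE] at B2
      omega
    · -- both proper nonempty
      obtain ⟨x1, hx1⟩ := Set.nonempty_iff_ne_empty.mpr hX1e
      have hX2ne : X2.Nonempty :=
        Set.diff_nonempty.mpr (fun hsub => hX1E (subset_antisymm hX1sub hsub))
      have hX1ss : X1 ⊂ M.E := hX1sub.ssubset_of_ne hX1E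
      have hX2ss : X2 ⊂ M.E := by
        refine hX2sub.ssubset_of_ne ?_
        intro hEq
        have : x1 ∈ X2 := hEq ▸ hX1sub hx1
        exact this.2 hx1
      have hr1 : mrank M X1 = X1.ncard := mrank_indep ((hI X1).mpr hX1ss) hX1fin
      have hr2 : mrank M X2 = X2.ncard := mrank_indep ((hI X2).mpr hX2ss) hX2fin
      have hsum : X2.ncard = M.E.ncard - X1.ncard := Set.ncard_diff hX1sub hX1fin
      have hX1le : X1.ncard ≤ M.E.ncard := Set.ncard_le_ncard hX1sub hfin
      rw [hr1] at B1
      rw [hr2] at B2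
      -- d = |X1| + |X2| ≤ |S1| + |R| - |S1| = d - 1
      have hX2ne' : 0 < X2.ncard := (Set.ncard_pos hX2fin).mpr hX2ne
      omega


/-- Let `d ≥ 2` and let `M` be the matroid on a `d`-element ground set
whose independent sets are exactly the proper subsets of the ground set (the uniform
matroid `U_{d-1,d}`). Then in every depth-decomposition of `M` the root has exactly one
child. -/
theorem root_has_unique_child_of_circuit_matroid {α V : Type} (M : Matroid α)
    (d : ℕ) (hd : 2 ≤ d) (hfin : M.E.Finite) (hcard : M.E.ncard = d)
    (hI : ∀ I : Set α, M.Indep I ↔ I ⊂ M.E)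
    (root : V) (parent : V → V) (f : α → V)
    (h : IsDepthDecomp M root parent f) :
    ∃! v : V, v ≠ root ∧ parent v = root := by
  classical
  obtain ⟨hV, ⟨hroot, hreach⟩, hrank, hle⟩ := h
  haveI := hV
  have hRcard : Set.ncard {v : V | v ≠ root} = d - 1 := by
    rw [← hrank, mrank_ground hd hfin hcard hI]
  have hRne : ({v : V | v ≠ root} : Set V).Nonempty := by
    rw [← Set.ncard_pos (Set.toFinite _)]
    omega
  obtain ⟨v, hv⟩ := hRne
  obtain ⟨c, hcne, hcpar, -⟩ := exists_child hroot hreach hv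
  refine ⟨c, ⟨hcne, hcpar⟩, ?_⟩
  rintro c2 ⟨hc2ne, hc2par⟩
  by_contra hne
  exact two_children_false M d hd hfin hcard hI root parent f hV hroot hrank hle
    c2 c hc2ne hc2par hcne hcpar hne
end
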